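/- arXiv:2009.14659 — 4 statements merged into one kernel-verified Lean document; each statement's English description precedes it below -/
import Mathlib

section
/- Let Ω ⊂ ℝⁿ be a bounded open set, s ∈ (0,1), σ ∈ (0,s). There exists a constant 𝔠 = 𝔠(n,s,σ,Ω) > 0, independent of p, such that for every p ∈ [1,∞) and every u ∈ W^{s,p}(Ω): ‖u‖_{W^{σ,1}(Ω)} ≤ 𝔠 ‖u‖_{W^{s,p}(Ω)}, where ‖u‖_{W^{s,q}(Ω)} = ‖u‖_{L^q(Ω)} + [u]_{W^{s,q}(Ω)}. In particular the embedding constant can be chosen uniformly in p. -/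
open MeasureTheory Metric ENNReal

lemma aux_rpow_le {X : ℝ≥0∞} (hX : X ≠ ∞) {r : ℝ} (hr0 : 0 ≤ r) (hr1 : r ≤ 1) :
    X ^ r ≤ ENNReal.ofReal (max 1 X.toReal) := by
  rcases le_total X 1 with h | h
  · calc X ^ r ≤ 1 ^ r := ENNReal.rpow_le_rpow h hr0
    _ = 1 := ENNReal.one_rpow r
    _ ≤ _ := ENNReal.one_le_ofReal.2 (le_max_left _ _)
  · calc X ^ r ≤ X ^ (1:ℝ) := ENNReal.rpow_le_rpow_of_exponent_le h hr1
    _ = X := ENNReal.rpow_one X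
    _ ≤ _ := by
        conv_lhs => rw [← ENNReal.ofReal_toReal hX]
        exact ENNReal.ofReal_le_ofReal (le_max_right _ _)

lemma aux_ball (n : ℕ) {α₀ M : ℝ} (hα₀ : 0 < α₀) (hM : 1 ≤ M) :
    ∃ CC : ℝ≥0∞, CC ≠ ∞ ∧ ∀ α : ℝ, α₀ ≤ α → ∀ x : EuclideanSpace ℝ (Fin n),
      ∫⁻ y in closedBall x M, ENNReal.ofReal (dist x y ^ (α - n)) ≤
        CC * ENNReal.ofReal (M ^ α) := by
  have hM0 : (0:ℝ) < M := lt_of_lt_of_le one_pos hM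
  set W : ℝ≥0∞ := volume (ball (0 : EuclideanSpace ℝ (Fin n)) 1) with hW
  have hWtop : W ≠ ∞ := measure_ball_lt_top.ne
  set r₀ : ℝ≥0∞ := ENNReal.ofReal ((2:ℝ) ^ (-α₀)) with hr₀
  have hr₀lt : r₀ < 1 := by
    rw [hr₀, ← ENNReal.ofReal_one]
    exact (ENNReal.ofReal_lt_ofReal_iff one_pos).2
      (Real.rpow_lt_one_of_one_lt_of_neg one_lt_two (neg_lt_zero.2 hα₀))
  have hinv : (1 - r₀)⁻¹ ≠ ∞ := by
    rw [ENNReal.inv_ne_top]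
    simp only [ne_eq, tsub_eq_zero_iff_le, not_le]
    exact hr₀lt
  refine ⟨W * (1 + ENNReal.ofReal ((2:ℝ)^(n:ℕ)) * (1 - r₀)⁻¹), ?_, ?_⟩
  · exact ENNReal.mul_ne_top hWtop (by
      exact ENNReal.add_ne_top.2 ⟨ENNReal.one_ne_top, ENNReal.mul_ne_top ENNReal.ofReal_ne_top hinv⟩)
  intro α hα x
  rcases le_or_gt (n:ℝ) α with hcase | hcase
  · calc ∫⁻ y in closedBall x M, ENNReal.ofReal (dist x y ^ (α - n))
        ≤ ∫⁻ _ in closedBall x M, ENNReal.ofReal (M ^ (α - n)) := by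
          refine setLIntegral_mono' measurableSet_closedBall fun y hy => ?_
          refine ENNReal.ofReal_le_ofReal (Real.rpow_le_rpow dist_nonneg ?_ (sub_nonneg.2 hcase))
          rw [dist_comm]; exact mem_closedBall.1 hy
      _ = ENNReal.ofReal (M ^ (α - n)) * volume (closedBall x M) := setLIntegral_const _ _
      _ = ENNReal.ofReal (M ^ (α - n)) * (ENNReal.ofReal (M ^ (n:ℕ)) * W) := by
          rw [MeasureTheory.Measure.addHaar_closedBall _ x hM0.le, finrank_euclideanSpace_fin]
      _ = ENNReal.ofReal (M ^ α) * W := by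
          rw [← mul_assoc, ← ENNReal.ofReal_mul (by positivity)]
          congr 2
          rw [← Real.rpow_natCast M n, ← Real.rpow_add hM0, sub_add_cancel]
      _ ≤ _ := by
          rw [mul_comm]
          exact mul_le_mul_left (le_mul_of_one_le_right zero_le (le_add_right le_rfl)) _
  · -- α < n : dyadic annuli
    set f : EuclideanSpace ℝ (Fin n) → ℝ≥0∞ := fun y => ENNReal.ofReal (dist x y ^ (α - n)) with hf
    set A : ℕ → Set (EuclideanSpace ℝ (Fin n)) := fun k =>
      closedBall x (M * 2⁻¹ ^ k) \ closedBall x (M * 2⁻¹ ^ (k+1)) with hA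
    have hcover : closedBall x M ⊆ {x} ∪ ⋃ k, A k := by
      intro y hy
      rcases eq_or_ne y x with h | h
      · exact Or.inl h
      · right
        have hd : 0 < dist y x := dist_pos.2 h
        have hex : ∃ k, M * 2⁻¹ ^ (k+1) < dist y x := by
          obtain ⟨k, hk⟩ := exists_pow_lt_of_lt_one (div_pos hd hM0)
            (by norm_num : (2:ℝ)⁻¹ < 1)
          refine ⟨k, ?_⟩
          have hk' : M * 2⁻¹ ^ k < dist y x := by
            rw [lt_div_iff₀ hM0] at hk; linarith [hk]
          have : (2:ℝ)⁻¹ ^ (k+1) ≤ 2⁻¹ ^ k :=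
            pow_le_pow_of_le_one (by norm_num) (by norm_num) (by omega)
          nlinarith
        classical
        refine Set.mem_iUnion.2 ⟨Nat.find hex, ?_, ?_⟩
        · rcases Nat.eq_zero_or_pos (Nat.find hex) with h0 | h0
          · rw [h0]; simpa using hy
          · obtain ⟨m, hm⟩ := Nat.exists_eq_succ_of_ne_zero h0.ne'
            have hmin := Nat.find_min hex (m := m) (by omega)
            rw [not_lt] at hmin
            exact mem_closedBall.2 (by rw [hm]; exact hmin)
        · intro hmem
          exact absurd (mem_closedBall.1 hmem) (not_le.2 (Nat.find_spec hex))
    have hsing : ∫⁻ y in ({x} : Set (EuclideanSpace ℝ (Fin n))), f y = 0 := by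
      rw [lintegral_singleton]
      simp [hf, Real.zero_rpow (ne_of_lt (sub_neg.2 hcase))]
    have hreal : ∀ k : ℕ, (M * 2⁻¹ ^ (k+1))^(α-(n:ℝ)) * (M * 2⁻¹ ^ k)^(n:ℕ) ≤
        M ^ α * 2^(n:ℕ) * ((2:ℝ)^(-α₀))^k := by
      intro k
      have ht : (0:ℝ) < 2⁻¹ := by norm_num
      have c1 : ((2:ℝ)⁻¹ ^ (k+1))^(α-(n:ℝ)) = (2⁻¹:ℝ) ^ (((k:ℝ)+1)*(α-(n:ℝ))) := by
        rw [← Real.rpow_natCast (2⁻¹:ℝ) (k+1), ← Real.rpow_mul ht.le]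
        push_cast; ring_nf
      have c2 : ((2:ℝ)⁻¹ ^ k)^(n:ℕ) = (2⁻¹:ℝ) ^ ((k:ℝ)*(n:ℝ)) := by
        rw [← pow_mul, ← Real.rpow_natCast (2⁻¹:ℝ) (k*n)]
        push_cast; ring_nf
      have c3 : (2:ℝ)^(n:ℕ) = (2⁻¹:ℝ) ^ (-(n:ℝ)) := by
        rw [Real.rpow_neg ht.le, Real.inv_rpow (by norm_num : (0:ℝ) ≤ 2), inv_inv,
          Real.rpow_natCast]
      have c4 : ((2:ℝ)^(-α₀))^k = (2⁻¹:ℝ) ^ (α₀*(k:ℝ)) := by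
        rw [show (2:ℝ)^(-α₀) = (2⁻¹:ℝ)^α₀ by
            rw [Real.inv_rpow (by norm_num : (0:ℝ) ≤ 2), ← Real.rpow_neg (by norm_num : (0:ℝ) ≤ 2)],
          ← Real.rpow_natCast ((2⁻¹:ℝ)^α₀) k, ← Real.rpow_mul ht.le]
      have hMsplit : (M * 2⁻¹ ^ (k+1))^(α-(n:ℝ)) * (M * 2⁻¹ ^ k)^(n:ℕ) =
          (M^(α-(n:ℝ)) * M^(n:ℕ)) * (((2:ℝ)⁻¹ ^ (k+1))^(α-(n:ℝ)) * ((2:ℝ)⁻¹ ^ k)^(n:ℕ)) := by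
        rw [Real.mul_rpow hM0.le (by positivity), mul_pow]; ring
      have hMα : M^(α-(n:ℝ)) * M^(n:ℕ) = M ^ α := by
        rw [← Real.rpow_natCast M n, ← Real.rpow_add hM0, sub_add_cancel]
      rw [hMsplit, hMα, c1, c2, c3, c4, ← Real.rpow_add ht, mul_assoc, ← Real.rpow_add ht]
      have hαpos : 0 < α := lt_of_lt_of_le hα₀ hα
      have hkα : (k:ℝ) * α₀ ≤ (k:ℝ) * α := mul_le_mul_of_nonneg_left hα (Nat.cast_nonneg k)
      refine mul_le_mul_of_nonneg_left ?_ (Real.rpow_nonneg hM0.le α)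
      refine Real.rpow_le_rpow_of_exponent_ge ht (by norm_num) ?_
      nlinarith
    have hterm : ∀ k : ℕ, ∫⁻ y in A k, f y ≤
        (ENNReal.ofReal (M ^ α * 2^(n:ℕ)) * W) * r₀ ^ k := by
      intro k
      have hpos1 : (0:ℝ) < M * 2⁻¹ ^ (k+1) := by positivity
      calc ∫⁻ y in A k, f y
          ≤ ∫⁻ _ in A k, ENNReal.ofReal ((M * 2⁻¹ ^ (k+1)) ^ (α - (n:ℝ))) := by
            refine setLIntegral_mono' (measurableSet_closedBall.diff measurableSet_closedBall)
              fun y hy => ?_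
            refine ENNReal.ofReal_le_ofReal ?_
            rw [hf] at *
            rw [dist_comm]
            have h2 : M * 2⁻¹ ^ (k+1) < dist y x :=
              not_le.1 fun h => hy.2 (mem_closedBall.mpr h)
            exact Real.rpow_le_rpow_of_nonpos hpos1 h2.le (sub_nonpos.2 hcase.le)
        _ = ENNReal.ofReal ((M * 2⁻¹ ^ (k+1)) ^ (α - (n:ℝ))) * volume (A k) :=
            setLIntegral_const _ _
        _ ≤ ENNReal.ofReal ((M * 2⁻¹ ^ (k+1)) ^ (α - (n:ℝ))) *
              volume (closedBall x (M * 2⁻¹ ^ k)) :=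
            mul_le_mul_right (measure_mono Set.diff_subset) _
        _ = ENNReal.ofReal ((M * 2⁻¹ ^ (k+1)) ^ (α - (n:ℝ)) * (M * 2⁻¹ ^ k)^(n:ℕ)) * W := by
            rw [MeasureTheory.Measure.addHaar_closedBall _ x (by positivity),
              finrank_euclideanSpace_fin, ← mul_assoc,
              ← ENNReal.ofReal_mul (Real.rpow_nonneg hpos1.le _)]
        _ ≤ ENNReal.ofReal (M ^ α * 2^(n:ℕ) * ((2:ℝ)^(-α₀))^k) * W :=
            mul_le_mul_left (ENNReal.ofReal_le_ofReal (hreal k)) _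
        _ = (ENNReal.ofReal (M ^ α * 2^(n:ℕ)) * W) * r₀ ^ k := by
            rw [ENNReal.ofReal_mul (by positivity), ENNReal.ofReal_pow (by positivity)]
            ring
    calc ∫⁻ y in closedBall x M, f y
        ≤ ∫⁻ y in ({x} : Set (EuclideanSpace ℝ (Fin n))) ∪ ⋃ k, A k, f y := lintegral_mono_set hcover
      _ ≤ (∫⁻ y in ({x} : Set (EuclideanSpace ℝ (Fin n))), f y) + ∫⁻ y in ⋃ k, A k, f y := lintegral_union_le _ _ _
      _ ≤ 0 + ∑' k, ∫⁻ y in A k, f y := add_le_add hsing.le (lintegral_iUnion_le _ _)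
      _ ≤ ∑' k, (ENNReal.ofReal (M ^ α * 2^(n:ℕ)) * W) * r₀ ^ k := by
          rw [zero_add]; exact ENNReal.tsum_le_tsum hterm
      _ = (ENNReal.ofReal (M ^ α * 2^(n:ℕ)) * W) * (1 - r₀)⁻¹ := by
          rw [ENNReal.tsum_mul_left, ENNReal.tsum_geometric]
      _ ≤ W * (1 + ENNReal.ofReal ((2:ℝ)^(n:ℕ)) * (1 - r₀)⁻¹) * ENNReal.ofReal (M ^ α) := by
          rw [ENNReal.ofReal_mul (by positivity)]
          calc ENNReal.ofReal (M ^ α) * ENNReal.ofReal ((2:ℝ)^(n:ℕ)) * W * (1 - r₀)⁻¹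
              = W * (ENNReal.ofReal ((2:ℝ)^(n:ℕ)) * (1 - r₀)⁻¹) * ENNReal.ofReal (M ^ α) := by
                ring
            _ ≤ W * (1 + ENNReal.ofReal ((2:ℝ)^(n:ℕ)) * (1 - r₀)⁻¹) * ENNReal.ofReal (M ^ α) := by
                exact mul_le_mul_left (mul_le_mul_right le_add_self _) _


open MeasureTheory ENNReal Filter

/-- A set `Ω ⊆ ℝⁿ` has Lipschitz boundary: near each boundary point, `Ω` is the
(rotated) hypograph of a Lipschitz function. -/
def HasLipschitzBoundary {n : ℕ} (Ω : Set (EuclideanSpace ℝ (Fin n))) : Prop :=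
  ∀ x ∈ frontier Ω, ∃ (e : EuclideanSpace ℝ (Fin n)) (K : NNReal)
    (f : EuclideanSpace ℝ (Fin n) → ℝ) (r : ℝ), ‖e‖ = 1 ∧ 0 < r ∧ LipschitzWith K f ∧
      ∀ y ∈ Metric.ball x r, (y ∈ Ω ↔ (inner ℝ y e : ℝ) < f (y - (inner ℝ y e : ℝ) • e))

/-- The (q-th power of the) Gagliardo double integral
`∫_Ω ∫_Ω |u(x)-u(y)|^q / |x-y|^{n+sq} dx dy`. -/
noncomputable def gagliardoIntegral {n : ℕ} (Ω : Set (EuclideanSpace ℝ (Fin n)))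
    (s q : ℝ) (u : EuclideanSpace ℝ (Fin n) → ℝ) : ℝ≥0∞ :=
  ∫⁻ x in Ω, ∫⁻ y in Ω,
      ENNReal.ofReal (|u x - u y| ^ q / dist x y ^ ((n : ℝ) + s * q))

/-- The Gagliardo seminorm `[u]_{W^{s,q}(Ω)}`. -/
noncomputable def gagliardoSeminorm {n : ℕ} (Ω : Set (EuclideanSpace ℝ (Fin n)))
    (s q : ℝ) (u : EuclideanSpace ℝ (Fin n) → ℝ) : ℝ≥0∞ :=
  (gagliardoIntegral Ω s q u) ^ (1 / q)

/-- The fractional Sobolev norm `‖u‖_{W^{s,q}(Ω)} = ‖u‖_{L^q(Ω)} + [u]_{W^{s,q}(Ω)}`. -/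
noncomputable def sobolevNorm {n : ℕ} (Ω : Set (EuclideanSpace ℝ (Fin n)))
    (s q : ℝ) (u : EuclideanSpace ℝ (Fin n) → ℝ) : ℝ≥0∞ :=
  (∫⁻ x in Ω, ENNReal.ofReal (|u x| ^ q)) ^ (1 / q) + gagliardoSeminorm Ω s q u

/-- `Q(Ω) = ℝ^{2n} ∖ (Ω^c × Ω^c)`: pairs with at least one point in `Ω`. -/
def QΩ {n : ℕ} (Ω : Set (EuclideanSpace ℝ (Fin n))) :
    Set (EuclideanSpace ℝ (Fin n) × EuclideanSpace ℝ (Fin n)) :=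
  {p | p.1 ∈ Ω ∨ p.2 ∈ Ω}

/-- The nonlocal `(s,q)`-energy `E_s^q(u) = (1/(2q)) ∬_{Q(Ω)} |u(x)-u(y)|^q/|x-y|^{n+sq}`. -/
noncomputable def energy {n : ℕ} (Ω : Set (EuclideanSpace ℝ (Fin n)))
    (s q : ℝ) (u : EuclideanSpace ℝ (Fin n) → ℝ) : ℝ≥0∞ :=
  (ENNReal.ofReal (2 * q))⁻¹ *
    ∫⁻ p in QΩ Ω, ENNReal.ofReal (|u p.1 - u p.2| ^ q / dist p.1 p.2 ^ ((n : ℝ) + s * q))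

/-- The nonlocal tail `T_s^p(φ, Ω^c; x) = ∫_{Ω^c} |φ(y)|^p / |x-y|^{n+sp} dy`. -/
noncomputable def tail {n : ℕ} (Ω : Set (EuclideanSpace ℝ (Fin n)))
    (s p : ℝ) (φ : EuclideanSpace ℝ (Fin n) → ℝ) (x : EuclideanSpace ℝ (Fin n)) : ℝ≥0∞ :=
  ∫⁻ y in Ωᶜ, ENNReal.ofReal (|φ y| ^ p / dist x y ^ ((n : ℝ) + s * p))

theorem stmt1 {n : ℕ} (Ω : Set (EuclideanSpace ℝ (Fin n)))
    (hΩo : IsOpen Ω) (hΩb : Bornology.IsBounded Ω)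
    (s σ : ℝ) (hs : s ∈ Set.Ioo (0 : ℝ) 1) (hσ : σ ∈ Set.Ioo (0 : ℝ) s) :
    ∃ c : ℝ, 0 < c ∧ ∀ p : ℝ, 1 ≤ p →
      ∀ u : EuclideanSpace ℝ (Fin n) → ℝ, Measurable u →
        sobolevNorm Ω σ 1 u ≤ ENNReal.ofReal c * sobolevNorm Ω s p u := by
  classical
  obtain ⟨hs0, hs1⟩ := hs
  obtain ⟨hσ0, hσs⟩ := hσ
  obtain ⟨D, hD⟩ := Metric.isBounded_iff.1 hΩb
  set M : ℝ := max 1 D with hMdef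
  have hM1 : (1:ℝ) ≤ M := le_max_left _ _
  have hM0 : (0:ℝ) < M := lt_of_lt_of_le one_pos hM1
  have hss : (0:ℝ) < s - σ := sub_pos.2 hσs
  obtain ⟨CC, hCCtop, hCC⟩ := aux_ball n hss hM1
  set V : ℝ≥0∞ := volume Ω with hVdef
  have hVtop : V ≠ ∞ := hΩb.measure_lt_top.ne
  set c₁ : ℝ := max 1 V.toReal with hc₁
  set c₂ : ℝ := max 1 (V * CC).toReal * M ^ (s - σ) with hc₂
  have hc₁1 : (1:ℝ) ≤ c₁ := le_max_left _ _
  have hMs : (0:ℝ) < M ^ (s-σ) := Real.rpow_pos_of_pos hM0 _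
  have hc₂M : M ^ (s - σ) ≤ c₂ := le_mul_of_one_le_left hMs.le (le_max_left _ _)
  set c : ℝ := max c₁ c₂ with hcdef
  have hc1 : (1:ℝ) ≤ c := le_trans hc₁1 (le_max_left _ _)
  refine ⟨c, lt_of_lt_of_le one_pos hc1, ?_⟩
  intro p hp u hu
  have hmeas2 : ∀ a b : ℝ, Measurable (fun z :
      EuclideanSpace ℝ (Fin n) × EuclideanSpace ℝ (Fin n) =>
      ENNReal.ofReal (|u z.1 - u z.2| ^ a / dist z.1 z.2 ^ b)) := fun a b =>
    Measurable.ennreal_ofReal ((((hu.comp measurable_fst).sub (hu.comp measurable_snd)).abs.pow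
      measurable_const).div ((measurable_fst.dist measurable_snd).pow measurable_const))
  have hGIconv : ∀ a b : ℝ, gagliardoIntegral Ω a b u =
      ∫⁻ z, ENNReal.ofReal (|u z.1 - u z.2| ^ b / dist z.1 z.2 ^ ((n:ℝ) + a * b))
        ∂((volume.restrict Ω).prod (volume.restrict Ω)) := fun a b =>
    lintegral_lintegral
      (f := fun x y => ENNReal.ofReal (|u x - u y| ^ b / dist x y ^ ((n:ℝ) + a * b)))
      ((hmeas2 b ((n:ℝ) + a * b)).aemeasurable)
  have hΩsub : ∀ x ∈ Ω, Ω ⊆ Metric.closedBall x M := fun x hx y hy =>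
    Metric.mem_closedBall.2 ((hD hy hx).trans (le_max_right _ _))
  have hdistM : ∀ x ∈ Ω, ∀ y ∈ Ω, dist x y ≤ M := fun x hx y hy =>
    (hD hx hy).trans (le_max_right 1 D)
  suffices h : (∫⁻ x in Ω, ENNReal.ofReal (|u x| ^ (1:ℝ))) ≤
        ENNReal.ofReal c * (∫⁻ x in Ω, ENNReal.ofReal (|u x| ^ p)) ^ (1/p) ∧
      gagliardoIntegral Ω σ 1 u ≤ ENNReal.ofReal c * gagliardoSeminorm Ω s p u by
    calc sobolevNorm Ω σ 1 u
        = (∫⁻ x in Ω, ENNReal.ofReal (|u x| ^ (1:ℝ))) + gagliardoIntegral Ω σ 1 u := by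
          rw [sobolevNorm, gagliardoSeminorm, one_div_one, ENNReal.rpow_one, ENNReal.rpow_one]
      _ ≤ ENNReal.ofReal c * (∫⁻ x in Ω, ENNReal.ofReal (|u x| ^ p)) ^ (1/p)
            + ENNReal.ofReal c * gagliardoSeminorm Ω s p u := add_le_add h.1 h.2
      _ = ENNReal.ofReal c * sobolevNorm Ω s p u := by rw [sobolevNorm, mul_add]
  rcases eq_or_lt_of_le hp with hp1 | hp1
  · -- p = 1
    subst hp1
    constructor
    · rw [one_div_one, ENNReal.rpow_one]
      exact le_mul_of_one_le_left zero_le (ENNReal.one_le_ofReal.2 hc1)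
    · rw [gagliardoSeminorm, one_div_one, ENNReal.rpow_one]
      have hpt : ∀ x ∈ Ω, ∀ y ∈ Ω,
          ENNReal.ofReal (|u x - u y| ^ (1:ℝ) / dist x y ^ ((n:ℝ) + σ*1)) ≤
          ENNReal.ofReal (M ^ (s-σ)) *
            ENNReal.ofReal (|u x - u y| ^ (1:ℝ) / dist x y ^ ((n:ℝ) + s*1)) := by
        intro x hx y hy
        rw [← ENNReal.ofReal_mul hMs.le]
        apply ENNReal.ofReal_le_ofReal
        rcases eq_or_lt_of_le (dist_nonneg : (0:ℝ) ≤ dist x y) with hd | hd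
        · have hxy : u x - u y = 0 := by rw [dist_eq_zero.1 hd.symm, sub_self]
          rw [hxy]
          simp only [abs_zero, Real.rpow_one, zero_div]
          positivity
        · have hdM : dist x y ≤ M := hdistM x hx y hy
          rw [Real.rpow_one]
          have hsplit : dist x y ^ ((n:ℝ) + s*1) =
              dist x y ^ ((n:ℝ) + σ*1) * dist x y ^ (s - σ) := by
            rw [← Real.rpow_add hd]; ring_nf
          rw [hsplit]
          have h1 : dist x y ^ (s-σ) ≤ M ^ (s-σ) := Real.rpow_le_rpow hd.le hdM hss.le
          have hd1 : 0 < dist x y ^ ((n:ℝ) + σ*1) := Real.rpow_pos_of_pos hd _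
          have hd2 : 0 < dist x y ^ (s - σ) := Real.rpow_pos_of_pos hd _
          rw [mul_div_assoc', div_le_div_iff₀ hd1 (mul_pos hd1 hd2)]
          nlinarith [mul_le_mul_of_nonneg_right
            (mul_le_mul_of_nonneg_left h1 (abs_nonneg (u x - u y))) hd1.le]
      calc gagliardoIntegral Ω σ 1 u
          ≤ ∫⁻ x in Ω, ∫⁻ y in Ω, ENNReal.ofReal (M ^ (s-σ)) *
              ENNReal.ofReal (|u x - u y| ^ (1:ℝ) / dist x y ^ ((n:ℝ) + s*1)) := by
            rw [gagliardoIntegral]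
            refine setLIntegral_mono' hΩo.measurableSet fun x hx => ?_
            exact setLIntegral_mono' hΩo.measurableSet fun y hy => hpt x hx y hy
        _ = ENNReal.ofReal (M ^ (s-σ)) * gagliardoIntegral Ω s 1 u := by
            rw [gagliardoIntegral]
            simp_rw [lintegral_const_mul' (ENNReal.ofReal (M^(s-σ))) _ ENNReal.ofReal_ne_top]
        _ ≤ ENNReal.ofReal c * gagliardoIntegral Ω s 1 u :=
            mul_le_mul_left (ENNReal.ofReal_le_ofReal
              (hc₂M.trans (le_max_right c₁ c₂))) _
  · -- p > 1
    have hpq : p.HolderConjugate (Real.conjExponent p) := Real.HolderConjugate.conjExponent hp1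
    set q : ℝ := Real.conjExponent p with hqdef
    have hq1 : 1 < q := hpq.symm.lt
    have hq0 : (0:ℝ) < q := lt_trans one_pos hq1
    have hp0 : (0:ℝ) < p := hpq.pos
    have hiq : (0:ℝ) ≤ 1/q := by positivity
    have h1q : 1/q ≤ 1 := by rw [div_le_one hq0]; exact hq1.le
    have hsum := hpq.inv_add_inv_eq_one
    set ν := (volume.restrict Ω).prod (volume.restrict Ω) with hνdef
    set A : ℝ := (n:ℝ)/p + s with hAdef
    set e : ℝ := s - σ - (n:ℝ)/q with hedef
    set F1 : EuclideanSpace ℝ (Fin n) × EuclideanSpace ℝ (Fin n) → ℝ≥0∞ :=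
      fun z => ENNReal.ofReal (|u z.1 - u z.2| / dist z.1 z.2 ^ A) with hF1
    set F2 : EuclideanSpace ℝ (Fin n) × EuclideanSpace ℝ (Fin n) → ℝ≥0∞ :=
      fun z => ENNReal.ofReal (dist z.1 z.2 ^ e) with hF2
    have hnpq : (n:ℝ)/p + (n:ℝ)/q = n := by
      have h' : (n:ℝ)/p + (n:ℝ)/q = n * (p⁻¹ + q⁻¹) := by ring
      rw [h', hsum, mul_one]
    have hexp : ((n:ℝ) + σ*1) + e = A := by
      rw [hedef, hAdef]; linarith [hnpq]
    have hmeasF1 : Measurable F1 :=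
      Measurable.ennreal_ofReal ((((hu.comp measurable_fst).sub
        (hu.comp measurable_snd)).abs).div
        ((measurable_fst.dist measurable_snd).pow measurable_const))
    have hmeasF2 : Measurable F2 :=
      Measurable.ennreal_ofReal ((measurable_fst.dist measurable_snd).pow measurable_const)
    constructor
    · -- L part
      have hH := ENNReal.lintegral_mul_le_Lp_mul_Lq (volume.restrict Ω) hpq
        (f := fun x => ENNReal.ofReal |u x|) (g := fun _ => (1:ℝ≥0∞))
        (hu.abs.ennreal_ofReal.aemeasurable) aemeasurable_const
      simp only [Pi.mul_apply, mul_one, ENNReal.one_rpow, lintegral_one,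
        Measure.restrict_apply_univ] at hH
      calc ∫⁻ x in Ω, ENNReal.ofReal (|u x| ^ (1:ℝ))
          = ∫⁻ x in Ω, ENNReal.ofReal |u x| :=
            lintegral_congr fun x => by rw [Real.rpow_one]
        _ ≤ (∫⁻ a in Ω, ENNReal.ofReal |u a| ^ p) ^ (1/p) * V ^ (1/q) := hH
        _ = (∫⁻ a in Ω, ENNReal.ofReal (|u a| ^ p)) ^ (1/p) * V ^ (1/q) := by
            congr 1
            congr 1
            exact lintegral_congr fun a =>
              ENNReal.ofReal_rpow_of_nonneg (abs_nonneg _) hp0.le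
        _ ≤ (∫⁻ a in Ω, ENNReal.ofReal (|u a| ^ p)) ^ (1/p) * ENNReal.ofReal c₁ :=
            mul_le_mul_right (aux_rpow_le hVtop hiq h1q) _
        _ ≤ ENNReal.ofReal c * (∫⁻ x in Ω, ENNReal.ofReal (|u x| ^ p)) ^ (1/p) := by
            rw [mul_comm]
            exact mul_le_mul_left
              (ENNReal.ofReal_le_ofReal (le_max_left c₁ c₂)) _
    · -- seminorm part
      have hprod : gagliardoIntegral Ω σ 1 u = ∫⁻ z, (F1 * F2) z ∂ν := by
        rw [hGIconv σ 1]
        refine lintegral_congr fun z => ?_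
        show ENNReal.ofReal (|u z.1 - u z.2| ^ (1:ℝ) / dist z.1 z.2 ^ ((n:ℝ) + σ*1)) =
          F1 z * F2 z
        rcases eq_or_lt_of_le (dist_nonneg : (0:ℝ) ≤ dist z.1 z.2) with hd | hd
        · have hz : u z.1 - u z.2 = 0 := by rw [dist_eq_zero.1 hd.symm, sub_self]
          rw [hF1]
          simp [hz, Real.rpow_one]
        · rw [hF1, hF2]
          simp only []
          rw [← ENNReal.ofReal_mul (div_nonneg (abs_nonneg _) (Real.rpow_nonneg dist_nonneg _))]
          congr 1
          rw [Real.rpow_one, div_mul_eq_mul_div,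
            show dist z.1 z.2 ^ A = dist z.1 z.2 ^ ((n:ℝ) + σ*1) * dist z.1 z.2 ^ e by
              rw [← Real.rpow_add hd, hexp],
            mul_div_mul_right _ _ (ne_of_gt (Real.rpow_pos_of_pos hd e))]
      have hHold := ENNReal.lintegral_mul_le_Lp_mul_Lq ν hpq
        hmeasF1.aemeasurable hmeasF2.aemeasurable
      have hF1p : (∫⁻ z, F1 z ^ p ∂ν) = gagliardoIntegral Ω s p u := by
        rw [hGIconv s p]
        refine lintegral_congr fun z => ?_
        rw [hF1]
        simp only []
        rw [ENNReal.ofReal_rpow_of_nonneg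
          (div_nonneg (abs_nonneg _) (Real.rpow_nonneg dist_nonneg _)) hp0.le]
        congr 1
        rw [Real.div_rpow (abs_nonneg _) (Real.rpow_nonneg dist_nonneg _),
          ← Real.rpow_mul dist_nonneg]
        congr 1
        rw [hAdef]
        field_simp
      have hF2q : (∫⁻ z, F2 z ^ q ∂ν) ≤ V * (CC * ENNReal.ofReal (M ^ ((s-σ)*q))) := by
        have hmeasd : Measurable (fun z :
            EuclideanSpace ℝ (Fin n) × EuclideanSpace ℝ (Fin n) =>
            ENNReal.ofReal (dist z.1 z.2 ^ ((s-σ)*q - n))) :=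
          Measurable.ennreal_ofReal ((measurable_fst.dist measurable_snd).pow measurable_const)
        have hptF2 : ∀ z, F2 z ^ q = ENNReal.ofReal (dist z.1 z.2 ^ ((s-σ)*q - n)) := by
          intro z
          rw [hF2]
          simp only []
          rw [ENNReal.ofReal_rpow_of_nonneg (Real.rpow_nonneg dist_nonneg _) hq0.le,
            ← Real.rpow_mul dist_nonneg]
          congr 2
          rw [hedef]
          field_simp
        calc (∫⁻ z, F2 z ^ q ∂ν)
            = ∫⁻ x in Ω, ∫⁻ y in Ω, ENNReal.ofReal (dist x y ^ ((s-σ)*q - n)) := by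
              rw [lintegral_congr hptF2, hνdef,
                ← lintegral_lintegral
                  (f := fun x y => ENNReal.ofReal (dist x y ^ ((s-σ)*q - n)))
                  hmeasd.aemeasurable]
          _ ≤ ∫⁻ _ in Ω, CC * ENNReal.ofReal (M ^ ((s-σ)*q)) := by
              refine lintegral_mono_ae ?_
              filter_upwards [ae_restrict_mem hΩo.measurableSet] with x hx
              calc ∫⁻ y in Ω, ENNReal.ofReal (dist x y ^ ((s-σ)*q - n))
                  ≤ ∫⁻ y in Metric.closedBall x M,
                      ENNReal.ofReal (dist x y ^ ((s-σ)*q - n)) :=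
                    lintegral_mono_set (hΩsub x hx)
                _ ≤ CC * ENNReal.ofReal (M ^ ((s-σ)*q)) :=
                    hCC _ (le_mul_of_one_le_right hss.le hq1.le) x
          _ = CC * ENNReal.ofReal (M ^ ((s-σ)*q)) * V := setLIntegral_const _ _
          _ = V * (CC * ENNReal.ofReal (M ^ ((s-σ)*q))) := mul_comm _ _
      calc gagliardoIntegral Ω σ 1 u
          = ∫⁻ z, (F1 * F2) z ∂ν := hprod
        _ ≤ (∫⁻ z, F1 z ^ p ∂ν) ^ (1/p) * (∫⁻ z, F2 z ^ q ∂ν) ^ (1/q) := hHold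
        _ ≤ (gagliardoIntegral Ω s p u) ^ (1/p) *
              (V * (CC * ENNReal.ofReal (M ^ ((s-σ)*q)))) ^ (1/q) := by
            rw [hF1p]
            exact mul_le_mul_right (ENNReal.rpow_le_rpow hF2q hiq) _
        _ ≤ (gagliardoIntegral Ω s p u) ^ (1/p) * ENNReal.ofReal c₂ := by
            refine mul_le_mul_right ?_ _
            have h1 : (V * (CC * ENNReal.ofReal (M ^ ((s-σ)*q)))) ^ (1/q) =
                (V*CC) ^ (1/q) * (ENNReal.ofReal (M ^ ((s-σ)*q))) ^ (1/q) := by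
              rw [← mul_assoc, ENNReal.mul_rpow_of_nonneg _ _ hiq]
            have h2 : (ENNReal.ofReal (M ^ ((s-σ)*q))) ^ (1/q) =
                ENNReal.ofReal (M ^ (s-σ)) := by
              rw [ENNReal.ofReal_rpow_of_nonneg (Real.rpow_nonneg hM0.le _) hiq,
                ← Real.rpow_mul hM0.le]
              congr 1
              field_simp
            rw [h1, h2, hc₂, ENNReal.ofReal_mul (by positivity)]
            exact mul_le_mul_left
              (aux_rpow_le (ENNReal.mul_ne_top hVtop hCCtop) hiq h1q) _
        _ ≤ ENNReal.ofReal c * gagliardoSeminorm Ω s p u := by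
            rw [gagliardoSeminorm, mul_comm]
            exact mul_le_mul_left
              (ENNReal.ofReal_le_ofReal (le_max_right c₁ c₂)) _
end

section
/- Let Ω ⊂ ℝⁿ be a bounded open set and φ : ℝⁿ∖Ω → ℝ measurable. The following are equivalent: (i) there exists q > 1 such that sup_{p∈(1,q)} T_s^p(φ)(x) ∈ L¹(Ω), where T_s^p(φ)(x) = ∫_{ℝⁿ∖Ω} |φ(y)|^p/|x-y|^{n+sp} dy; (ii) there exists q > 1 such that sup_{p∈(1,q)} ‖T_s^p(φ)‖_{L¹(Ω)} < ∞; (iii) there exists q > 1 such that both T_s^1(φ) ∈ L¹(Ω) and T_s^q(φ) ∈ L¹(Ω). -/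
open MeasureTheory ENNReal Filter Topology

private lemma termMeas {n : ℕ} (s p : ℝ) (φ : EuclideanSpace ℝ (Fin n) → ℝ)
    (hφ : Measurable φ) :
    Measurable (fun z : EuclideanSpace ℝ (Fin n) × EuclideanSpace ℝ (Fin n) =>
      ENNReal.ofReal (|φ z.2| ^ p / dist z.1 z.2 ^ ((n : ℝ) + s * p))) := by
  apply ENNReal.measurable_ofReal.comp
  exact (((hφ.comp measurable_snd).abs).pow measurable_const).div
    (measurable_dist.pow measurable_const)

private lemma termMeas' {n : ℕ} (s p : ℝ) (φ : EuclideanSpace ℝ (Fin n) → ℝ)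
    (hφ : Measurable φ) (x : EuclideanSpace ℝ (Fin n)) :
    Measurable (fun y : EuclideanSpace ℝ (Fin n) =>
      ENNReal.ofReal (|φ y| ^ p / dist x y ^ ((n : ℝ) + s * p))) := by
  apply ENNReal.measurable_ofReal.comp
  exact ((hφ.abs).pow measurable_const).div
    ((measurable_const.dist measurable_id).pow measurable_const)

private lemma youngPt {n : ℕ} {s a d p q : ℝ} (ha : 0 ≤ a) (hd : 0 < d)
    (hp : p ∈ Set.Ioo 1 q) :
    a ^ p / d ^ ((n : ℝ) + s * p) ≤
      a ^ (1 : ℝ) / d ^ ((n : ℝ) + s * 1) + a ^ q / d ^ ((n : ℝ) + s * q) := by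
  obtain ⟨hp1, hpq⟩ := hp
  have hq1 : (0 : ℝ) < q - 1 := by linarith
  set t : ℝ := (q - p) / (q - 1) with ht
  have ht0 : 0 ≤ t := div_nonneg (by linarith) hq1.le
  have ht1 : t ≤ 1 := by rw [ht, div_le_one hq1]; linarith
  have hX : 0 ≤ a ^ (1 : ℝ) / d ^ ((n : ℝ) + s * 1) := by positivity
  have hY : 0 ≤ a ^ q / d ^ ((n : ℝ) + s * q) := by positivity
  rcases eq_or_lt_of_le ha with h0 | ha'
  · rw [← h0, Real.zero_rpow (by linarith : p ≠ 0), zero_div]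
    exact add_nonneg (by rw [← h0] at hX; exact hX) (by rw [← h0] at hY; exact hY)
  have key : a ^ p / d ^ ((n : ℝ) + s * p)
      = (a ^ (1 : ℝ) / d ^ ((n : ℝ) + s * 1)) ^ t
        * (a ^ q / d ^ ((n : ℝ) + s * q)) ^ (1 - t) := by
    rw [Real.div_rpow (Real.rpow_nonneg ha _) (Real.rpow_nonneg hd.le _),
        Real.div_rpow (Real.rpow_nonneg ha _) (Real.rpow_nonneg hd.le _),
        div_mul_div_comm, ← Real.rpow_mul ha, ← Real.rpow_mul ha,
        ← Real.rpow_mul hd.le, ← Real.rpow_mul hd.le,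
        ← Real.rpow_add ha', ← Real.rpow_add hd]
    have e1 : 1 * t + q * (1 - t) = p := by rw [ht]; field_simp; ring
    have e2 : ((n : ℝ) + s * 1) * t + ((n : ℝ) + s * q) * (1 - t) = (n : ℝ) + s * p := by
      rw [ht]; field_simp; ring
    rw [e1, e2]
  rw [key]
  set X := a ^ (1 : ℝ) / d ^ ((n : ℝ) + s * 1)
  set Y := a ^ q / d ^ ((n : ℝ) + s * q)
  calc X ^ t * Y ^ (1 - t)
      ≤ (X + Y) ^ t * (X + Y) ^ (1 - t) := by
        apply mul_le_mul (Real.rpow_le_rpow hX (le_add_of_nonneg_right hY) ht0)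
          (Real.rpow_le_rpow hY (le_add_of_nonneg_left hX) (by linarith))
          (Real.rpow_nonneg hY _) (Real.rpow_nonneg (add_nonneg hX hY) _)
    _ = (X + Y) ^ (t + (1 - t)) := by
        rw [Real.rpow_add' (add_nonneg hX hY) (by norm_num)]
    _ = X + Y := by norm_num

private lemma tendstoTerm {n : ℕ} (s a d : ℝ) (hd : 0 < d) {pk : ℕ → ℝ}
    (hpos : ∀ k, 0 < pk k) (hlim : Tendsto pk atTop (𝓝 1)) :
    Tendsto (fun k => ENNReal.ofReal (|a| ^ pk k / d ^ ((n : ℝ) + s * pk k))) atTop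
      (𝓝 (ENNReal.ofReal (|a| ^ (1 : ℝ) / d ^ ((n : ℝ) + s * 1)))) := by
  apply (ENNReal.continuous_ofReal.tendsto _).comp
  have hden : Tendsto (fun k => d ^ ((n : ℝ) + s * pk k)) atTop
      (𝓝 (d ^ ((n : ℝ) + s * 1))) := by
    have h1 : Tendsto (fun k => (n : ℝ) + s * pk k) atTop (𝓝 ((n : ℝ) + s * 1)) :=
      tendsto_const_nhds.add (tendsto_const_nhds.mul hlim)
    exact ((Real.continuousAt_const_rpow hd.ne').tendsto).comp h1
  have hnum : Tendsto (fun k => |a| ^ pk k) atTop (𝓝 (|a| ^ (1 : ℝ))) := by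
    rcases eq_or_ne a 0 with h | h
    · have hz : ∀ k, |a| ^ pk k = 0 := fun k => by
        rw [h, abs_zero, Real.zero_rpow (hpos k).ne']
      have htgt : |a| ^ (1 : ℝ) = 0 := by
        rw [h, abs_zero, Real.zero_rpow one_ne_zero]
      rw [htgt]
      simp only [hz]
      exact tendsto_const_nhds
    · exact ((Real.continuousAt_const_rpow (abs_ne_zero.mpr h)).tendsto).comp hlim
  exact hnum.div hden (Real.rpow_pos_of_pos hd _).ne'

private lemma tailMeas {n : ℕ} (Ω : Set (EuclideanSpace ℝ (Fin n))) (s p : ℝ)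
    (φ : EuclideanSpace ℝ (Fin n) → ℝ) (hφ : Measurable φ) :
    Measurable (tail Ω s p φ) :=
  Measurable.lintegral_prod_right' (termMeas s p φ hφ)

private lemma tail_one_le_liminf {n : ℕ} {Ω : Set (EuclideanSpace ℝ (Fin n))}
    (hΩ : MeasurableSet Ω) (s : ℝ) (φ : EuclideanSpace ℝ (Fin n) → ℝ)
    (hφ : Measurable φ) {pk : ℕ → ℝ} (hpos : ∀ k, 0 < pk k)
    (hlim : Tendsto pk atTop (𝓝 1)) {x : EuclideanSpace ℝ (Fin n)} (hx : x ∈ Ω) :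
    tail Ω s 1 φ x ≤ liminf (fun k => tail Ω s (pk k) φ x) atTop := by
  have hconv : ∀ y, y ∈ Ωᶜ →
      ENNReal.ofReal (|φ y| ^ (1 : ℝ) / dist x y ^ ((n : ℝ) + s * 1))
        = liminf (fun k =>
            ENNReal.ofReal (|φ y| ^ pk k / dist x y ^ ((n : ℝ) + s * pk k))) atTop := by
    intro y hy
    have hd : 0 < dist x y := dist_pos.mpr (fun h => hy (h ▸ hx))
    exact ((tendstoTerm (n := n) s (φ y) (dist x y) hd hpos hlim).liminf_eq).symm
  calc tail Ω s 1 φ x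
      = ∫⁻ y in Ωᶜ, liminf (fun k =>
          ENNReal.ofReal (|φ y| ^ pk k / dist x y ^ ((n : ℝ) + s * pk k))) atTop :=
        setLIntegral_congr_fun hΩ.compl hconv
    _ ≤ liminf (fun k => tail Ω s (pk k) φ x) atTop :=
        lintegral_liminf_le (fun k => termMeas' s (pk k) φ hφ x)

theorem stmt4 {n : ℕ} (Ω : Set (EuclideanSpace ℝ (Fin n)))
    (hΩo : IsOpen Ω) (hΩb : Bornology.IsBounded Ω)
    (s : ℝ) (hs : s ∈ Set.Ioo (0 : ℝ) 1)
    (φ : EuclideanSpace ℝ (Fin n) → ℝ) (hφ : Measurable φ) :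
    ((∃ q : ℝ, 1 < q ∧
        (∫⁻ x in Ω, ⨆ p ∈ Set.Ioo (1 : ℝ) q, tail Ω s p φ x) < ⊤) ↔
      (∃ q : ℝ, 1 < q ∧
        (⨆ p ∈ Set.Ioo (1 : ℝ) q, ∫⁻ x in Ω, tail Ω s p φ x) < ⊤)) ∧
    ((∃ q : ℝ, 1 < q ∧
        (∫⁻ x in Ω, ⨆ p ∈ Set.Ioo (1 : ℝ) q, tail Ω s p φ x) < ⊤) ↔
      (∃ q : ℝ, 1 < q ∧
        (∫⁻ x in Ω, tail Ω s 1 φ x) < ⊤ ∧ (∫⁻ x in Ω, tail Ω s q φ x) < ⊤)) := by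
  have hΩm : MeasurableSet Ω := hΩo.measurableSet
  -- the approximating sequence
  set pk : ℝ → ℕ → ℝ := fun q k => 1 + (q - 1) / (k + 2) with hpk_def
  have hpk_mem : ∀ q : ℝ, 1 < q → ∀ k : ℕ, pk q k ∈ Set.Ioo (1 : ℝ) q := by
    intro q hq k
    have hk2 : (0 : ℝ) < (k : ℝ) + 2 := by positivity
    constructor
    · have : 0 < (q - 1) / ((k : ℝ) + 2) := div_pos (by linarith) hk2
      simp only [hpk_def]; linarith
    · have : (q - 1) / ((k : ℝ) + 2) < q - 1 := by
        rw [div_lt_iff₀ hk2]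
        nlinarith
      simp only [hpk_def]; linarith
  have hpk_lim : ∀ q : ℝ, Tendsto (pk q) atTop (𝓝 1) := by
    intro q
    have h1 : Tendsto (fun k : ℕ => (q - 1) / ((k : ℝ) + 2)) atTop (𝓝 0) :=
      Tendsto.div_atTop tendsto_const_nhds
        (tendsto_atTop_add_const_right _ 2 tendsto_natCast_atTop_atTop)
    simpa using tendsto_const_nhds.add h1
  -- (tail 1) is pointwise dominated by the sup over p ∈ (1,q)
  have hliminf_le : ∀ q : ℝ, 1 < q → ∀ x ∈ Ω,
      tail Ω s 1 φ x ≤ liminf (fun k => tail Ω s (pk q k) φ x) atTop :=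
    fun q hq x hx => tail_one_le_liminf hΩm s φ hφ
      (fun k => lt_trans one_pos (hpk_mem q hq k).1) (hpk_lim q) hx
  have htail1_le_sup : ∀ q : ℝ, 1 < q → ∀ x ∈ Ω,
      tail Ω s 1 φ x ≤ ⨆ p ∈ Set.Ioo (1 : ℝ) q, tail Ω s p φ x := by
    intro q hq x hx
    refine (hliminf_le q hq x hx).trans ?_
    calc liminf (fun k => tail Ω s (pk q k) φ x) atTop
        ≤ liminf (fun _ : ℕ => ⨆ p ∈ Set.Ioo (1 : ℝ) q, tail Ω s p φ x) atTop :=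
          liminf_le_liminf (Eventually.of_forall fun k =>
            le_iSup₂ (f := fun p (_ : p ∈ Set.Ioo (1 : ℝ) q) => tail Ω s p φ x)
              (pk q k) (hpk_mem q hq k))
      _ = _ := liminf_const _
  -- Young: sup over p ∈ (1,q) is dominated by tail 1 + tail q
  have hsup_le : ∀ q : ℝ, 1 < q → ∀ x ∈ Ω,
      (⨆ p ∈ Set.Ioo (1 : ℝ) q, tail Ω s p φ x) ≤ tail Ω s 1 φ x + tail Ω s q φ x := by
    intro q hq x hx
    refine iSup₂_le fun p hp => ?_
    calc tail Ω s p φ x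
        ≤ ∫⁻ y in Ωᶜ, (ENNReal.ofReal (|φ y| ^ (1 : ℝ) / dist x y ^ ((n : ℝ) + s * 1))
            + ENNReal.ofReal (|φ y| ^ q / dist x y ^ ((n : ℝ) + s * q))) := by
          refine lintegral_mono_ae ((ae_restrict_iff' hΩm.compl).2 (ae_of_all _ fun y hy => ?_))
          have hd : 0 < dist x y := dist_pos.mpr (fun h => hy (h ▸ hx))
          exact (ENNReal.ofReal_le_ofReal
            (youngPt (n := n) (abs_nonneg (φ y)) hd hp)).trans ENNReal.ofReal_add_le
      _ = tail Ω s 1 φ x + tail Ω s q φ x :=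
          lintegral_add_left (termMeas' s 1 φ hφ x) _
  constructor
  · constructor
    · rintro ⟨q, hq, h⟩
      refine ⟨q, hq, lt_of_le_of_lt ?_ h⟩
      refine iSup₂_le fun p hp => lintegral_mono fun x => ?_
      exact le_iSup₂ (f := fun p (_ : p ∈ Set.Ioo (1 : ℝ) q) => tail Ω s p φ x) p hp
    · rintro ⟨q, hq, h⟩
      have hq' : (1 : ℝ) < (1 + q) / 2 := by linarith
      have hq'q : ((1 + q) / 2 : ℝ) ∈ Set.Ioo (1 : ℝ) q := ⟨hq', by linarith⟩
      -- tail q' integral finite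
      have h2 : (∫⁻ x in Ω, tail Ω s ((1 + q) / 2) φ x) < ⊤ :=
        lt_of_le_of_lt (le_iSup₂ (f := fun p (_ : p ∈ Set.Ioo (1 : ℝ) q) =>
          ∫⁻ x in Ω, tail Ω s p φ x) _ hq'q) h
      -- tail 1 integral finite via Fatou
      have h1 : (∫⁻ x in Ω, tail Ω s 1 φ x) < ⊤ := by
        refine lt_of_le_of_lt ?_ h
        calc (∫⁻ x in Ω, tail Ω s 1 φ x)
            ≤ ∫⁻ x in Ω, liminf (fun k => tail Ω s (pk q k) φ x) atTop :=
              lintegral_mono_ae ((ae_restrict_iff' hΩm).2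
                (ae_of_all _ fun x hx => hliminf_le q hq x hx))
          _ ≤ liminf (fun k => ∫⁻ x in Ω, tail Ω s (pk q k) φ x) atTop :=
              lintegral_liminf_le (fun k => tailMeas Ω s (pk q k) φ hφ)
          _ ≤ ⨆ p ∈ Set.Ioo (1 : ℝ) q, ∫⁻ x in Ω, tail Ω s p φ x := by
              calc liminf (fun k => ∫⁻ x in Ω, tail Ω s (pk q k) φ x) atTop
                  ≤ liminf (fun _ : ℕ =>
                      ⨆ p ∈ Set.Ioo (1 : ℝ) q, ∫⁻ x in Ω, tail Ω s p φ x) atTop :=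
                    liminf_le_liminf (Eventually.of_forall fun k =>
                      le_iSup₂ (f := fun p (_ : p ∈ Set.Ioo (1 : ℝ) q) =>
                        ∫⁻ x in Ω, tail Ω s p φ x) (pk q k) (hpk_mem q hq k))
                _ = _ := liminf_const _
      -- now (iii) at q' implies (i) at q'
      refine ⟨(1 + q) / 2, hq', ?_⟩
      calc (∫⁻ x in Ω, ⨆ p ∈ Set.Ioo (1 : ℝ) ((1 + q) / 2), tail Ω s p φ x)
          ≤ ∫⁻ x in Ω, (tail Ω s 1 φ x + tail Ω s ((1 + q) / 2) φ x) :=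
            lintegral_mono_ae ((ae_restrict_iff' hΩm).2
              (ae_of_all _ fun x hx => hsup_le _ hq' x hx))
        _ = (∫⁻ x in Ω, tail Ω s 1 φ x) + ∫⁻ x in Ω, tail Ω s ((1 + q) / 2) φ x :=
            lintegral_add_left (tailMeas Ω s 1 φ hφ) _
        _ < ⊤ := ENNReal.add_lt_top.mpr ⟨h1, h2⟩
  · constructor
    · rintro ⟨q, hq, h⟩
      have hq' : (1 : ℝ) < (1 + q) / 2 := by linarith
      have hq'q : ((1 + q) / 2 : ℝ) ∈ Set.Ioo (1 : ℝ) q := ⟨hq', by linarith⟩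
      refine ⟨(1 + q) / 2, hq', ?_, ?_⟩
      · refine lt_of_le_of_lt ?_ h
        exact lintegral_mono_ae ((ae_restrict_iff' hΩm).2
          (ae_of_all _ fun x hx => htail1_le_sup q hq x hx))
      · refine lt_of_le_of_lt ?_ h
        refine lintegral_mono fun x => ?_
        exact le_iSup₂ (f := fun p (_ : p ∈ Set.Ioo (1 : ℝ) q) => tail Ω s p φ x) _ hq'q
    · rintro ⟨q, hq, h1, h2⟩
      refine ⟨q, hq, ?_⟩
      calc (∫⁻ x in Ω, ⨆ p ∈ Set.Ioo (1 : ℝ) q, tail Ω s p φ x)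
          ≤ ∫⁻ x in Ω, (tail Ω s 1 φ x + tail Ω s q φ x) :=
            lintegral_mono_ae ((ae_restrict_iff' hΩm).2
              (ae_of_all _ fun x hx => hsup_le q hq x hx))
        _ = (∫⁻ x in Ω, tail Ω s 1 φ x) + ∫⁻ x in Ω, tail Ω s q φ x :=
            lintegral_add_left (tailMeas Ω s 1 φ hφ) _
        _ < ⊤ := ENNReal.add_lt_top.mpr ⟨h1, h2⟩
end

section
/- Let Ω ⊂ ℝⁿ be a bounded open set with Lipschitz boundary, s ∈ (0,1), p ∈ [1, 1/s), and φ : ℝⁿ∖Ω → ℝ with tail T_s^p(φ) ∈ L¹(Ω). If u = φ a.e. outside Ω and u minimizes the energy E_s^p among functions agreeing with φ outside Ω, then E_s^p(u) ≤ (1/p)‖T_s^p(φ)‖_{L¹(Ω)} and [u]_{W^{s,p}(Ω)} ≤ 2^{1/p} ‖T_s^p(φ)‖_{L¹(Ω)}^{1/p}. -/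
open MeasureTheory ENNReal Filter

section Aux

variable {n : ℕ}

private lemma meas_integrand {u : EuclideanSpace ℝ (Fin n) → ℝ} (hu : Measurable u)
    (c q : ℝ) : Measurable (fun p : EuclideanSpace ℝ (Fin n) × EuclideanSpace ℝ (Fin n) =>
      ENNReal.ofReal (|u p.1 - u p.2| ^ q / dist p.1 p.2 ^ c)) := by
  have h1 : Measurable (fun p : EuclideanSpace ℝ (Fin n) × EuclideanSpace ℝ (Fin n) =>
      |u p.1 - u p.2|) := ((hu.comp measurable_fst).sub (hu.comp measurable_snd)).abs
  have h2 : Measurable (fun p : EuclideanSpace ℝ (Fin n) × EuclideanSpace ℝ (Fin n) =>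
      dist p.1 p.2) := measurable_dist
  measurability

/-- Split the integral over `Q(Ω)` into the three pieces. -/
private lemma split_QΩ (Ω : Set (EuclideanSpace ℝ (Fin n))) (hΩ : MeasurableSet Ω)
    (g : EuclideanSpace ℝ (Fin n) × EuclideanSpace ℝ (Fin n) → ℝ≥0∞) (hg : Measurable g) :
    ∫⁻ p in QΩ Ω, g p =
      (∫⁻ x in Ω, ∫⁻ y in Ω, g (x, y)) + (∫⁻ x in Ω, ∫⁻ y in Ωᶜ, g (x, y)) +
        ∫⁻ x in Ωᶜ, ∫⁻ y in Ω, g (x, y) := by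
  have hprod : ∀ (A B : Set (EuclideanSpace ℝ (Fin n))),
      ∫⁻ p in A ×ˢ B, g p = ∫⁻ x in A, ∫⁻ y in B, g (x, y) := by
    intro A B
    have h1 : (volume : Measure (EuclideanSpace ℝ (Fin n) ×
        EuclideanSpace ℝ (Fin n))).restrict (A ×ˢ B)
        = ((volume : Measure (EuclideanSpace ℝ (Fin n))).restrict A).prod
          ((volume : Measure (EuclideanSpace ℝ (Fin n))).restrict B) :=
      (Measure.prod_restrict A B).symm
    rw [h1, lintegral_prod _ hg.aemeasurable]
  have hQ : QΩ Ω = (Ω ×ˢ Ω ∪ Ω ×ˢ Ωᶜ) ∪ Ωᶜ ×ˢ Ω := by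
    ext ⟨x, y⟩
    simp only [QΩ, Set.mem_setOf_eq, Set.mem_union, Set.mem_prod, Set.mem_compl_iff]
    tauto
  have hd1 : Disjoint ((Ω ×ˢ Ω ∪ Ω ×ˢ Ωᶜ) : Set _) (Ωᶜ ×ˢ Ω) := by
    apply Set.disjoint_left.mpr
    rintro ⟨x, y⟩ hxy ⟨hx, -⟩
    rcases hxy with ⟨hx', -⟩ | ⟨hx', -⟩ <;> exact hx hx'
  have hd2 : Disjoint ((Ω ×ˢ Ω) : Set _) (Ω ×ˢ Ωᶜ) := by
    apply Set.disjoint_left.mpr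
    rintro ⟨x, y⟩ ⟨-, hy⟩ ⟨-, hy'⟩
    exact hy' hy
  rw [hQ, lintegral_union (hΩ.compl.prod hΩ) hd1, lintegral_union (hΩ.prod hΩ.compl) hd2,
    hprod, hprod, hprod]

end Aux

theorem stmt7 {n : ℕ} (Ω : Set (EuclideanSpace ℝ (Fin n)))
    (hΩo : IsOpen Ω) (hΩb : Bornology.IsBounded Ω) (hΩlip : HasLipschitzBoundary Ω)
    (s p : ℝ) (hs : s ∈ Set.Ioo (0 : ℝ) 1) (hp : 1 ≤ p) (hp' : p < 1 / s)
    (φ u : EuclideanSpace ℝ (Fin n) → ℝ) (hφ : Measurable φ) (hu : Measurable u)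
    (hT : (∫⁻ x in Ω, tail Ω s p φ x) < ⊤)
    (hext : ∀ᵐ y ∂(volume.restrict Ωᶜ), u y = φ y)
    (hmin : ∀ v : EuclideanSpace ℝ (Fin n) → ℝ, Measurable v →
      (∀ᵐ y ∂(volume.restrict Ωᶜ), v y = φ y) → energy Ω s p u ≤ energy Ω s p v) :
    energy Ω s p u ≤ ENNReal.ofReal (1 / p) * (∫⁻ x in Ω, tail Ω s p φ x) ∧
    gagliardoSeminorm Ω s p u ≤
      (2 : ℝ≥0∞) ^ (1 / p) * (∫⁻ x in Ω, tail Ω s p φ x) ^ (1 / p) := by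
  have hΩm : MeasurableSet Ω := hΩo.measurableSet
  have hp0 : (0 : ℝ) < p := lt_of_lt_of_le one_pos hp
  classical
  set c : ℝ := (n : ℝ) + s * p with hc
  set T : ℝ≥0∞ := ∫⁻ x in Ω, tail Ω s p φ x with hTdef
  -- the competitor
  set v : EuclideanSpace ℝ (Fin n) → ℝ := fun x => if x ∈ Ω then 0 else φ x with hv
  have hvm : Measurable v := Measurable.ite hΩm measurable_const hφ
  have hvext : ∀ᵐ y ∂(volume.restrict Ωᶜ), v y = φ y := by
    filter_upwards [ae_restrict_mem hΩm.compl] with y hy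
    have hy' : y ∉ Ω := hy
    simp [hv, hy']
  -- energy of the competitor
  have hEv : energy Ω s p v = (ENNReal.ofReal (2 * p))⁻¹ * (2 * T) := by
    have hsplit := split_QΩ Ω hΩm _ (meas_integrand hvm c p)
    have h1 : (∫⁻ x in Ω, ∫⁻ y in Ω,
        ENNReal.ofReal (|v x - v y| ^ p / dist x y ^ c)) = 0 := by
      rw [← lintegral_zero (μ := volume.restrict Ω)]
      apply setLIntegral_congr_fun hΩm
      intro x hx
      rw [← lintegral_zero (μ := volume.restrict Ω)]
      apply setLIntegral_congr_fun hΩm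
      intro y hy
      simp [hv, hx, hy, Real.zero_rpow (ne_of_gt hp0)]
    have h2 : (∫⁻ x in Ω, ∫⁻ y in Ωᶜ,
        ENNReal.ofReal (|v x - v y| ^ p / dist x y ^ c)) = T := by
      apply setLIntegral_congr_fun hΩm
      intro x hx
      unfold tail
      apply setLIntegral_congr_fun hΩm.compl
      intro y hy
      have hy' : y ∉ Ω := hy
      simp [hv, hx, hy', hc]
    have h3 : (∫⁻ x in Ωᶜ, ∫⁻ y in Ω,
        ENNReal.ofReal (|v x - v y| ^ p / dist x y ^ c)) = T := by
      have hswap : (∫⁻ x in Ωᶜ, ∫⁻ y in Ω,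
          ENNReal.ofReal (|v x - v y| ^ p / dist x y ^ c)) =
          ∫⁻ y in Ω, ∫⁻ x in Ωᶜ, ENNReal.ofReal (|v x - v y| ^ p / dist x y ^ c) := by
        apply lintegral_lintegral_swap
        have := (meas_integrand hvm c p).aemeasurable
          (μ := ((volume.restrict Ωᶜ).prod (volume.restrict Ω)))
        exact this
      rw [hswap]
      apply setLIntegral_congr_fun hΩm
      intro y hy
      unfold tail
      apply setLIntegral_congr_fun hΩm.compl
      intro x hx
      have hx' : x ∉ Ω := hx
      beta_reduce
      rw [dist_comm]
      simp [hv, hy, hx', abs_sub_comm, hc]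
    rw [energy, hsplit, h1, h2, h3, zero_add]
    congr 1
    rw [two_mul]
  -- the constant identity
  have hconst : (ENNReal.ofReal (2 * p))⁻¹ * 2 = ENNReal.ofReal (1 / p) := by
    rw [ENNReal.ofReal_mul (by norm_num), ENNReal.ofReal_ofNat,
      ENNReal.mul_inv (Or.inl (by norm_num)) (Or.inl (by norm_num)),
      mul_right_comm, ENNReal.inv_mul_cancel (by norm_num) (by norm_num), one_mul,
      one_div, ← ENNReal.ofReal_inv_of_pos hp0]
  have hEv' : energy Ω s p v = ENNReal.ofReal (1 / p) * T := by
    rw [hEv, ← mul_assoc, hconst]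
  have part1 : energy Ω s p u ≤ ENNReal.ofReal (1 / p) * T := by
    rw [← hEv']; exact hmin v hvm hvext
  refine ⟨part1, ?_⟩
  -- bound the Gagliardo integral
  have hIu : gagliardoIntegral Ω s p u ≤ 2 * T := by
    have hsplit := split_QΩ Ω hΩm _ (meas_integrand hu c p)
    have hGI : gagliardoIntegral Ω s p u ≤
        ∫⁻ q in QΩ Ω, ENNReal.ofReal (|u q.1 - u q.2| ^ p / dist q.1 q.2 ^ c) := by
      rw [hsplit, gagliardoIntegral]
      exact le_add_right (le_add_right le_rfl)
    have hfin : (ENNReal.ofReal (2 * p)) ≠ 0 := by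
      simp [ENNReal.ofReal_eq_zero]; positivity
    have htop : (ENNReal.ofReal (2 * p)) ≠ ⊤ := ENNReal.ofReal_ne_top
    have key : (∫⁻ q in QΩ Ω, ENNReal.ofReal (|u q.1 - u q.2| ^ p / dist q.1 q.2 ^ c))
        ≤ 2 * T := by
      have := mul_le_mul_right part1 (ENNReal.ofReal (2 * p))
      rw [energy, ← mul_assoc, ENNReal.mul_inv_cancel hfin htop, one_mul] at this
      refine this.trans ?_
      rw [← mul_assoc, ← ENNReal.ofReal_mul (by positivity)]
      have : 2 * p * (1 / p) = 2 := by field_simp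
      rw [this]
      norm_num
    exact hGI.trans key
  have h1p : (0 : ℝ) ≤ 1 / p := by positivity
  calc gagliardoSeminorm Ω s p u = (gagliardoIntegral Ω s p u) ^ (1 / p) := rfl
    _ ≤ (2 * T) ^ (1 / p) := ENNReal.rpow_le_rpow hIu h1p
    _ = (2 : ℝ≥0∞) ^ (1 / p) * T ^ (1 / p) := ENNReal.mul_rpow_of_nonneg _ _ h1p
end

section
/- Let Ω ⊂ ℝⁿ be a bounded open set with Lipschitz boundary and s ∈ (0,1). Suppose u ∈ W^{s,1}(Ω) (extended measurably to ℝⁿ) is a weak solution of the fractional 1-Laplace equation in Ω, i.e., there exists an antisymmetric z ∈ L^∞(Q(Ω)) with ‖z‖_∞ ≤ 1, z(x,y)(u(x)-u(y)) = |u(x)-u(y)| a.e. in Q(Ω), and ∬_{Q(Ω)} z(x,y)(w(x)-w(y))/|x-y|^{n+s} dx dy = 0 for all w ∈ W^{s,1}(Ω) vanishing a.e. outside Ω. Then u is an s-minimal function: for every v with v = u a.e. in Ω^c and v ∈ W^{s,1}(Ω), ∬_{Q(Ω)} [|u(x)-u(y)| - |v(x)-v(y)|]/|x-y|^{n+s}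 dx dy ≤ 0. -/
open MeasureTheory ENNReal Filter

open Metric in
lemma slab_vol {n : ℕ} (F : EuclideanSpace ℝ (Fin n) → ℝ) (e : EuclideanSpace ℝ (Fin n))
    (he1 : ‖e‖ = 1)
    (hF : ∀ y (t : ℝ), F (y + t • e) = F y + t) (hFc : Continuous F)
    (c : EuclideanSpace ℝ (Fin n)) {R h : ℝ} (hh : 0 < h) (hR : 0 < R) :
    volume {y | y ∈ Metric.ball c R ∧ |F y| < h} ≤
      ENNReal.ofReal (2 * h / R) * (ENNReal.ofReal ((2*R) ^ n) *
        volume (Metric.ball (0 : EuclideanSpace ℝ (Fin n)) 1)) := by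
  set S := {y | y ∈ Metric.ball c R ∧ |F y| < h} with hS
  have hSeq : S = Metric.ball c R ∩ F ⁻¹' (Set.Ioo (-h) h) := by
    ext y
    simp only [hS, Set.mem_setOf_eq, Set.mem_inter_iff, Set.mem_preimage, Set.mem_Ioo, abs_lt]
  have hSm : MeasurableSet S := by
    rw [hSeq]
    exact (Metric.isOpen_ball.inter (isOpen_Ioo.preimage hFc)).measurableSet
  set M := ⌈R / (2*h)⌉₊ with hMdef
  have hM1 : 1 ≤ M := Nat.one_le_ceil_iff.mpr (by positivity)
  set T : ℕ → Set (EuclideanSpace ℝ (Fin n)) :=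
    fun j => (fun y => y + ((2*h*j) • e)) '' S with hT
  have hTpre : ∀ j, T j = (fun y => y + (-((2*h*j) • e))) ⁻¹' S := by
    intro j
    ext y
    simp only [hT, Set.mem_image, Set.mem_preimage]
    constructor
    · rintro ⟨x, hx, rfl⟩; simpa [add_assoc] using hx
    · intro hy; exact ⟨_, hy, by simp [add_assoc]⟩
  have hTm : ∀ j, MeasurableSet (T j) := fun j => by
    rw [hTpre j]; exact hSm.preimage (measurable_id.add_const _)
  have hTvol : ∀ j, volume (T j) = volume S := fun j => by
    rw [hTpre j, measure_preimage_add_right]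
  have hFT : ∀ j y, y ∈ T j → |F y - 2*h*j| < h := by
    rintro j y ⟨x, hx, rfl⟩
    rw [hF]
    have := hx.2
    rw [abs_lt] at this ⊢
    constructor <;> linarith [this.1, this.2]
  have hdisj : (↑(Finset.range M) : Set ℕ).PairwiseDisjoint T := by
    intro i _ j _ hij
    refine Set.disjoint_left.mpr fun {y} hyi hyj => hij ?_
    have h1 := hFT i y hyi
    have h2 := hFT j y hyj
    have hlt : |(2*h*(i:ℝ)) - (2*h*(j:ℝ))| < 2*h := by
      calc |(2*h*(i:ℝ)) - (2*h*(j:ℝ))| = |-(F y - 2*h*i) + (F y - 2*h*j)| := by ring_nf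
        _ ≤ |-(F y - 2*h*i)| + |F y - 2*h*j| := abs_add_le _ _
        _ = |F y - 2*h*i| + |F y - 2*h*j| := by rw [abs_neg]
        _ < h + h := add_lt_add h1 h2
        _ = 2*h := by ring
    rcases Nat.lt_or_ge i j with hij' | hij'
    · exfalso
      have : (i:ℝ) + 1 ≤ j := by exact_mod_cast hij'
      rw [abs_lt] at hlt
      nlinarith [hlt.1]
    rcases Nat.lt_or_ge j i with hji' | hji'
    · exfalso
      have : (j:ℝ) + 1 ≤ i := by exact_mod_cast hji'
      rw [abs_lt] at hlt
      nlinarith [hlt.2]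
    omega
  have hsub : ∀ j ∈ Finset.range M, T j ⊆ Metric.ball c (2*R) := by
    rintro j hj y ⟨x, hx, rfl⟩
    have hjM : j + 1 ≤ M := Finset.mem_range.mp hj
    have hj' : (j:ℝ) ≤ (M:ℝ) - 1 := by
      have : ((j:ℝ) + 1) ≤ (M:ℝ) := by exact_mod_cast hjM
      linarith
    have hM' : (M:ℝ) < R/(2*h) + 1 := Nat.ceil_lt_add_one (by positivity)
    have hxc : dist x c < R := hx.1
    have hnorm : ‖(2*h*(j:ℝ)) • e‖ = 2*h*j := by
      rw [norm_smul, he1, mul_one, Real.norm_eq_abs, abs_of_nonneg (by positivity)]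
    have hd : dist (x + (2*h*(j:ℝ))•e) x = 2*h*(j:ℝ) := by
      rw [dist_eq_norm, add_sub_cancel_left, hnorm]
    have hjlt : 2*h*(j:ℝ) < R := by
      have h1 : (j:ℝ) < R/(2*h) := by linarith
      calc 2*h*(j:ℝ) < 2*h*(R/(2*h)) := by nlinarith
        _ = R := by field_simp
    calc dist (x + (2*h*j) • e) c ≤ dist (x + (2*h*j)•e) x + dist x c := dist_triangle _ _ _
      _ = 2*h*(j:ℝ) + dist x c := by rw [hd]
      _ < 2*R := by linarith
  have hunion : volume (⋃ j ∈ Finset.range M, T j) ≤ volume (Metric.ball c (2*R)) :=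
    measure_mono (Set.iUnion₂_subset hsub)
  have hsum : (M : ℝ≥0∞) * volume S = volume (⋃ j ∈ Finset.range M, T j) := by
    rw [measure_biUnion_finset hdisj (fun j _ => hTm j)]
    simp only [hTvol]
    rw [Finset.sum_const, Finset.card_range, nsmul_eq_mul]
  have hball : volume (Metric.ball c (2*R)) =
      ENNReal.ofReal ((2*R)^n) * volume (Metric.ball (0 : EuclideanSpace ℝ (Fin n)) 1) := by
    rw [Measure.addHaar_ball_of_pos volume c (by positivity : (0:ℝ) < 2*R)]
    congr 2
    rw [finrank_euclideanSpace_fin]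
  have hkey : (M : ℝ≥0∞) * volume S ≤
      ENNReal.ofReal ((2*R)^n) * volume (Metric.ball (0 : EuclideanSpace ℝ (Fin n)) 1) := by
    rw [hsum, ← hball]; exact hunion
  have hone : (1:ℝ≥0∞) ≤ ENNReal.ofReal (2*h/R) * (M : ℝ≥0∞) := by
    have hreal : (1:ℝ) ≤ (2*h/R) * M := by
      have hle : R/(2*h) ≤ (M:ℝ) := Nat.le_ceil _
      rw [div_mul_eq_mul_div, le_div_iff₀ hR]
      calc (1:ℝ)*R = R := one_mul R
        _ = (2*h) * (R/(2*h)) := by field_simp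
        _ ≤ (2*h) * M := by nlinarith
        _ = 2*h*M := rfl
    rw [← ENNReal.ofReal_natCast M, ← ENNReal.ofReal_mul (by positivity)]
    exact ENNReal.one_le_ofReal.mpr hreal
  calc volume S = 1 * volume S := (one_mul _).symm
    _ ≤ (ENNReal.ofReal (2*h/R) * M) * volume S := by
        exact mul_le_mul_left hone _
    _ = ENNReal.ofReal (2*h/R) * ((M:ℝ≥0∞) * volume S) := by ring
    _ ≤ _ := by exact mul_le_mul_right hkey _


open Metric in
lemma layer_bound {n : ℕ} {Ω : Set (EuclideanSpace ℝ (Fin n))}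
    (hΩo : IsOpen Ω) (hΩb : Bornology.IsBounded Ω) (hΩlip : HasLipschitzBoundary Ω)
    (hcne : Ωᶜ.Nonempty) :
    ∃ r₀ : ℝ, 0 < r₀ ∧ ∃ C : ℝ≥0∞, C ≠ ⊤ ∧ ∀ t : ℝ, 0 < t → t < r₀ →
      volume {x | x ∈ Ω ∧ Metric.infDist x Ωᶜ < t} ≤ C * ENNReal.ofReal t := by
  classical
  rcases Set.eq_empty_or_nonempty Ω with hΩe | hΩne
  · exact ⟨1, one_pos, 0, zero_ne_top, fun t _ _ => by simp [hΩe]⟩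
  -- frontier is nonempty and compact
  have hfrne : (frontier Ω).Nonempty := by
    by_contra hemp
    rw [Set.not_nonempty_iff_eq_empty] at hemp
    have hclopen : IsClopen Ω := isClopen_iff_frontier_eq_empty.mpr hemp
    rcases isClopen_iff.mp hclopen with rfl | rfl
    · exact hΩne.ne_empty rfl
    · exact hcne.ne_empty (by simp)
  have hfc : IsCompact (frontier Ω) :=
    Metric.isCompact_of_isClosed_isBounded isClosed_frontier
      (hΩb.closure.subset frontier_subset_closure)
  choose! e K f r he1 hrpos hlip hchart using hΩlip
  -- the chart defining functions
  set F : EuclideanSpace ℝ (Fin n) → EuclideanSpace ℝ (Fin n) → ℝ :=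
    fun x y => (inner ℝ y (e x) : ℝ) - f x (y - (inner ℝ y (e x) : ℝ) • e x) with hFdef
  have hchart' : ∀ x ∈ frontier Ω, ∀ y ∈ Metric.ball x (r x), (y ∈ Ω ↔ F x y < 0) := by
    intro x hx y hy
    rw [hFdef]
    simp only [sub_neg]
    exact hchart x hx y hy
  have hFshift : ∀ x ∈ frontier Ω, ∀ y (t : ℝ), F x (y + t • e x) = F x y + t := by
    intro x hx y t
    have hee : (inner ℝ (e x) (e x) : ℝ) = 1 := by
      rw [real_inner_self_eq_norm_mul_norm, he1 x hx, mul_one]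
    have hiy : (inner ℝ (y + t • e x) (e x) : ℝ) = (inner ℝ y (e x) : ℝ) + t := by
      rw [inner_add_left, real_inner_smul_left, hee, mul_one]
    rw [hFdef]
    simp only [hiy]
    have harg : (y + t • e x) - ((inner ℝ y (e x) : ℝ) + t) • e x
        = y - (inner ℝ y (e x) : ℝ) • e x := by
      rw [add_smul]; abel
    rw [harg]; ring
  have hFcont : ∀ x ∈ frontier Ω, Continuous (F x) := by
    intro x hx
    rw [hFdef]
    have h1 : Continuous fun y : EuclideanSpace ℝ (Fin n) => (inner ℝ y (e x) : ℝ) :=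
      continuous_id.inner continuous_const
    exact h1.sub ((hlip x hx).continuous.comp (continuous_id.sub (h1.smul continuous_const)))
  have hFlipb : ∀ x ∈ frontier Ω, ∀ p q, |F x p - F x q| ≤ (1 + 2*(K x : ℝ)) * dist p q := by
    intro x hx p q
    have hinner : (inner ℝ p (e x) : ℝ) - (inner ℝ q (e x) : ℝ) = (inner ℝ (p - q) (e x) : ℝ) := by
      rw [inner_sub_left]
    have hin_le : |(inner ℝ (p - q) (e x) : ℝ)| ≤ ‖p - q‖ := by
      calc |(inner ℝ (p - q) (e x) : ℝ)| ≤ ‖p - q‖ * ‖e x‖ := abs_real_inner_le_norm _ _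
        _ = ‖p - q‖ := by rw [he1 x hx, mul_one]
    have hproj : ‖(p - (inner ℝ p (e x) : ℝ) • e x) - (q - (inner ℝ q (e x) : ℝ) • e x)‖
        ≤ 2 * ‖p - q‖ := by
      have : (p - (inner ℝ p (e x) : ℝ) • e x) - (q - (inner ℝ q (e x) : ℝ) • e x)
          = (p - q) - ((inner ℝ (p-q) (e x) : ℝ)) • e x := by
        rw [← hinner, sub_smul]; abel
      rw [this]
      calc ‖(p - q) - ((inner ℝ (p-q) (e x) : ℝ)) • e x‖
          ≤ ‖p - q‖ + ‖((inner ℝ (p-q) (e x) : ℝ)) • e x‖ := norm_sub_le _ _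
        _ = ‖p - q‖ + |(inner ℝ (p-q) (e x) : ℝ)| * ‖e x‖ := by rw [norm_smul, Real.norm_eq_abs]
        _ = ‖p - q‖ + |(inner ℝ (p-q) (e x) : ℝ)| := by rw [he1 x hx, mul_one]
        _ ≤ ‖p - q‖ + ‖p - q‖ := add_le_add_right hin_le _
        _ = 2 * ‖p - q‖ := by ring
    have hflip := (hlip x hx).dist_le_mul (p - (inner ℝ p (e x) : ℝ) • e x)
      (q - (inner ℝ q (e x) : ℝ) • e x)
    rw [Real.dist_eq] at hflip
    rw [hFdef]
    have : (inner ℝ p (e x) : ℝ) - f x (p - (inner ℝ p (e x):ℝ) • e x)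
        - ((inner ℝ q (e x) : ℝ) - f x (q - (inner ℝ q (e x):ℝ) • e x))
        = ((inner ℝ (p-q) (e x) : ℝ))
          - (f x (p - (inner ℝ p (e x):ℝ) • e x) - f x (q - (inner ℝ q (e x):ℝ) • e x)) := by
      rw [← hinner]; ring
    simp only
    rw [this]
    have hdd : dist (p - (inner ℝ p (e x):ℝ) • e x) (q - (inner ℝ q (e x):ℝ) • e x)
        ≤ 2 * ‖p - q‖ := by rw [dist_eq_norm]; exact hproj
    calc |(inner ℝ (p-q) (e x) : ℝ) - (f x (p - (inner ℝ p (e x):ℝ) • e x)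
            - f x (q - (inner ℝ q (e x):ℝ) • e x))|
        ≤ |(inner ℝ (p-q) (e x) : ℝ)| + |f x (p - (inner ℝ p (e x):ℝ) • e x)
            - f x (q - (inner ℝ q (e x):ℝ) • e x)| := abs_sub _ _
      _ ≤ ‖p - q‖ + (K x : ℝ) * (2 * ‖p - q‖) :=
          add_le_add hin_le (hflip.trans
            (mul_le_mul_of_nonneg_left hdd (K x).coe_nonneg))
      _ = (1 + 2*(K x : ℝ)) * ‖p - q‖ := by ring
      _ = (1 + 2*(K x : ℝ)) * dist p q := by rw [dist_eq_norm]
  have hF0 : ∀ x ∈ frontier Ω, ∀ q ∈ frontier Ω, q ∈ Metric.ball x (r x) → F x q = 0 := by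
    intro x hx q hq hqball
    have hqnot : q ∉ Ω := by
      rw [hΩo.frontier_eq] at hq; exact hq.2
    have hge : 0 ≤ F x q := by
      by_contra hlt
      push_neg at hlt
      exact hqnot ((hchart' x hx q hqball).mpr hlt)
    have hle : F x q ≤ 0 := by
      have hqcl : q ∈ closure Ω := by
        rw [hΩo.frontier_eq] at hq; exact hq.1
      obtain ⟨a, haΩ, halim⟩ := mem_closure_iff_seq_limit.mp hqcl
      have hev : ∀ᶠ k in atTop, F x (a k) ≤ 0 := by
        have hball : ∀ᶠ k in atTop, a k ∈ Metric.ball x (r x) :=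
          halim.eventually (isOpen_ball.eventually_mem hqball)
        filter_upwards [hball] with k hk
        exact le_of_lt ((hchart' x hx (a k) hk).mp (haΩ k))
      exact le_of_tendsto (((hFcont x hx).tendsto q).comp halim) hev
    linarith
  -- covering of the frontier
  set U : frontier Ω → Set (EuclideanSpace ℝ (Fin n)) :=
    fun i => Metric.ball (i : EuclideanSpace ℝ (Fin n)) (r i / 4) with hU
  have hcov : frontier Ω ⊆ ⋃ i, U i := by
    intro q hq
    exact Set.mem_iUnion.mpr ⟨⟨q, hq⟩, Metric.mem_ball_self (by
      have := hrpos q hq; positivity)⟩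
  obtain ⟨tf, htf⟩ := hfc.elim_finite_subcover U (fun i => Metric.isOpen_ball) hcov
  have htfne : tf.Nonempty := by
    obtain ⟨q0, hq0⟩ := hfrne
    obtain ⟨i, hit, -⟩ := Set.mem_iUnion₂.mp (htf hq0)
    exact ⟨i, hit⟩
  set ν := volume (Metric.ball (0 : EuclideanSpace ℝ (Fin n)) 1) with hν
  set r₀ : ℝ := tf.inf' htfne (fun i => r i / 4) with hr₀
  have hr₀pos : 0 < r₀ := by
    rw [hr₀, Finset.lt_inf'_iff]
    intro i _
    have := hrpos i i.2
    positivity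
  set C : ℝ≥0∞ := ∑ i ∈ tf, ENNReal.ofReal (2 * (1+2*((K i:NNReal):ℝ)) / (r i / 2)) *
      (ENNReal.ofReal ((2*(r i / 2))^n) * ν) with hC
  have hCne : C ≠ ⊤ := by
    rw [hC]
    refine (ENNReal.sum_lt_top.mpr fun i _ => ?_).ne
    exact ENNReal.mul_lt_top ENNReal.ofReal_lt_top
      (ENNReal.mul_lt_top ENNReal.ofReal_lt_top measure_ball_lt_top)
  refine ⟨r₀, hr₀pos, C, hCne, ?_⟩
  intro t ht htr
  have hincl : {x | x ∈ Ω ∧ Metric.infDist x Ωᶜ < t} ⊆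
      ⋃ i ∈ tf, {y | y ∈ Metric.ball (i : EuclideanSpace ℝ (Fin n)) (r i / 2) ∧
        |F i y| < (1+2*((K i : NNReal):ℝ)) * t} := by
    intro p hp
    obtain ⟨hpΩ, hpd⟩ := hp
    obtain ⟨q, hqc, hqd⟩ := (hΩo.isClosed_compl).exists_infDist_eq_dist hcne p
    have hpq : p ≠ q := fun hpq => hqc (hpq ▸ hpΩ)
    have hdpos : 0 < dist p q := dist_pos.mpr hpq
    have hdt : dist p q < t := by rw [← hqd]; exact hpd
    have hqcl : q ∈ closure Ω := by
      rw [Metric.mem_closure_iff]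
      intro ε hε
      set θ : ℝ := min 1 (ε / (2 * dist p q)) with hθ
      have hθpos : 0 < θ := lt_min one_pos (by positivity)
      have hθ1 : θ ≤ 1 := min_le_left _ _
      refine ⟨q + θ • (p - q), ?_, ?_⟩
      · by_contra hm
        have hdistm : dist p (q + θ • (p - q)) = (1-θ) * dist p q := by
          rw [dist_eq_norm]
          have harg : p - (q + θ • (p - q)) = (1-θ) • (p - q) := by
            rw [sub_smul, one_smul]; abel
          rw [harg, norm_smul, Real.norm_eq_abs, abs_of_nonneg (by linarith),
            ← dist_eq_norm]
        have hinf : Metric.infDist p Ωᶜ ≤ (1-θ) * dist p q := by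
          rw [← hdistm]
          exact Metric.infDist_le_dist_of_mem hm
        rw [hqd] at hinf
        nlinarith
      · have hdq : dist q (q + θ • (p-q)) = θ * dist p q := by
          rw [dist_eq_norm]
          have harg : q - (q + θ • (p - q)) = (-θ) • (p - q) := by
            rw [neg_smul]; abel
          rw [harg, norm_smul, Real.norm_eq_abs, abs_neg, abs_of_nonneg hθpos.le,
            ← dist_eq_norm]
        rw [hdq]
        have hθ2 : θ ≤ ε / (2 * dist p q) := min_le_right _ _
        calc θ * dist p q ≤ (ε / (2*dist p q)) * dist p q := by nlinarith
          _ = ε/2 := by field_simp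
          _ < ε := by linarith
    have hqfront : q ∈ frontier Ω := by
      rw [hΩo.frontier_eq]; exact ⟨hqcl, hqc⟩
    obtain ⟨i, hit, hqU⟩ := Set.mem_iUnion₂.mp (htf hqfront)
    have hqU' : dist q (i : EuclideanSpace ℝ (Fin n)) < r i / 4 := hqU
    have hri : 0 < r i := hrpos i i.2
    have hr₀le : r₀ ≤ r i / 4 := Finset.inf'_le _ hit
    refine Set.mem_iUnion₂.mpr ⟨i, hit, ?_, ?_⟩
    · have : dist p (i : EuclideanSpace ℝ (Fin n)) ≤ dist p q + dist q i :=
        dist_triangle _ _ _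
      have h2 : dist p (i : EuclideanSpace ℝ (Fin n)) < t + r i / 4 := by
        calc dist p (i : EuclideanSpace ℝ (Fin n)) ≤ dist p q + dist q i := this
          _ < t + r i / 4 := add_lt_add hdt hqU'
      exact lt_of_lt_of_le h2 (by linarith)
    · have hq0 : F i q = 0 := hF0 i i.2 q hqfront
        (Metric.mem_ball.mpr (hqU'.trans (by linarith)))
      have hlipb := hFlipb i i.2 p q
      rw [hq0, sub_zero] at hlipb
      calc |F (i : EuclideanSpace ℝ (Fin n)) p| ≤ (1+2*((K i:NNReal):ℝ)) * dist p q := hlipb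
        _ < (1+2*((K i:NNReal):ℝ)) * t := by
            have hKpos : (0:ℝ) < 1 + 2*((K i:NNReal):ℝ) := by positivity
            exact (mul_lt_mul_iff_right₀ hKpos).mpr hdt
  calc volume {x | x ∈ Ω ∧ Metric.infDist x Ωᶜ < t}
      ≤ volume (⋃ i ∈ tf, {y | y ∈ Metric.ball (i : EuclideanSpace ℝ (Fin n)) (r i / 2) ∧
          |F i y| < (1+2*((K i : NNReal):ℝ)) * t}) := measure_mono hincl
    _ ≤ ∑ i ∈ tf, volume {y | y ∈ Metric.ball (i : EuclideanSpace ℝ (Fin n)) (r i / 2) ∧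
          |F i y| < (1+2*((K i : NNReal):ℝ)) * t} := measure_biUnion_finset_le _ _
    _ ≤ ∑ i ∈ tf, (ENNReal.ofReal (2 * (1+2*((K i:NNReal):ℝ)) / (r i / 2)) *
          (ENNReal.ofReal ((2*(r i / 2))^n) * ν)) * ENNReal.ofReal t := by
        refine Finset.sum_le_sum fun i hit => ?_
        have hri : 0 < r i := hrpos i i.2
        have hslab := slab_vol (F (i : EuclideanSpace ℝ (Fin n))) (e i) (he1 i i.2)
          (hFshift i i.2) (hFcont i i.2) (i : EuclideanSpace ℝ (Fin n))
          (show (0:ℝ) < (1+2*((K i:NNReal):ℝ)) * t by positivity)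
          (show (0:ℝ) < r i / 2 by positivity)
        refine hslab.trans ?_
        have heq : ENNReal.ofReal (2 * ((1+2*((K i:NNReal):ℝ)) * t) / (r i / 2))
            = ENNReal.ofReal (2 * (1+2*((K i:NNReal):ℝ)) / (r i / 2)) * ENNReal.ofReal t := by
          rw [← ENNReal.ofReal_mul (by positivity)]
          congr 1
          field_simp
        rw [heq]
        ring_nf
        exact le_refl _
    _ = C * ENNReal.ofReal t := by rw [hC, Finset.sum_mul]


open Metric in
lemma annuli_bound {n : ℕ} {s : ℝ} (hs0 : 0 < s) (W : Set (EuclideanSpace ℝ (Fin n)))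
    (x : EuclideanSpace ℝ (Fin n)) {δ : ℝ} (hδ : 0 < δ)
    (hΩd : ∀ y ∈ W, δ ≤ dist x y) :
    (∫⁻ y in W, ENNReal.ofReal ((dist x y ^ ((n:ℝ) + s))⁻¹)) ≤
      (ENNReal.ofReal ((2:ℝ)^n) * volume (Metric.ball (0:EuclideanSpace ℝ (Fin n)) 1) *
        (1 - ENNReal.ofReal ((2:ℝ)^(-s)))⁻¹) * ENNReal.ofReal (δ ^ (-s)) := by
  set A : ℕ → Set (EuclideanSpace ℝ (Fin n)) :=
    fun j => {y | 2^j * δ ≤ dist x y ∧ dist x y < 2^(j+1) * δ} with hA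
  have hAm : ∀ j, MeasurableSet (A j) := by
    intro j
    have : A j = (fun y => dist x y) ⁻¹' (Set.Ico (2^j * δ) (2^(j+1) * δ)) := rfl
    rw [this]
    exact measurableSet_Ico.preimage (measurable_const.dist measurable_id)
  have hsub : W ⊆ ⋃ j, A j := by
    intro y hy
    have hd : δ ≤ dist x y := hΩd y hy
    have hex : ∃ m : ℕ, dist x y < 2^(m+1) * δ := by
      obtain ⟨m, hm⟩ := pow_unbounded_of_one_lt (dist x y / δ) (one_lt_two (α := ℝ))
      exact ⟨m, by
        rw [div_lt_iff₀ hδ] at hm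
        calc dist x y < 2^m * δ := hm
          _ ≤ 2^(m+1)*δ := by
              have : (2:ℝ)^m ≤ 2^(m+1) := by
                apply pow_le_pow_right₀ one_le_two (Nat.le_succ m)
              nlinarith⟩
    set j := Nat.find hex with hj
    refine Set.mem_iUnion.mpr ⟨j, ?_, Nat.find_spec hex⟩
    rcases Nat.eq_zero_or_pos j with hj0 | hjpos
    · rw [hj0]; simpa using hd
    · obtain ⟨k, hk⟩ := Nat.exists_eq_succ_of_ne_zero hjpos.ne'
      have hnot := Nat.find_min hex (m := k) (by omega)
      push_neg at hnot
      rw [hk]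
      exact hnot
  have hterm : ∀ j : ℕ, (∫⁻ y in A j, ENNReal.ofReal ((dist x y ^ ((n:ℝ) + s))⁻¹)) ≤
      (ENNReal.ofReal ((2:ℝ)^n) * volume (Metric.ball (0:EuclideanSpace ℝ (Fin n)) 1)
        * ENNReal.ofReal (δ ^ (-s))) * (ENNReal.ofReal ((2:ℝ)^(-s)))^j := by
    intro j
    have haj : (0:ℝ) < 2^j * δ := by positivity
    have hstep : ∀ y ∈ A j, ENNReal.ofReal ((dist x y ^ ((n:ℝ) + s))⁻¹)
        ≤ ENNReal.ofReal (((2^j * δ) ^ ((n:ℝ) + s))⁻¹) := by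
      intro y hy
      apply ENNReal.ofReal_le_ofReal
      apply inv_anti₀
      · positivity
      · exact Real.rpow_le_rpow haj.le hy.1 (by positivity)
    calc (∫⁻ y in A j, ENNReal.ofReal ((dist x y ^ ((n:ℝ) + s))⁻¹))
        ≤ ∫⁻ _ in A j, ENNReal.ofReal (((2^j * δ) ^ ((n:ℝ) + s))⁻¹) :=
          setLIntegral_mono' (hAm j) hstep
      _ = ENNReal.ofReal (((2^j * δ) ^ ((n:ℝ) + s))⁻¹) * volume (A j) :=
          setLIntegral_const _ _
      _ ≤ ENNReal.ofReal (((2^j * δ) ^ ((n:ℝ) + s))⁻¹) *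
            volume (Metric.ball x (2^(j+1) * δ)) := by
          apply mul_le_mul_right
          apply measure_mono
          intro y hy
          rw [Metric.mem_ball, dist_comm]
          exact hy.2
      _ = ENNReal.ofReal (((2^j * δ) ^ ((n:ℝ) + s))⁻¹) *
            (ENNReal.ofReal ((2^(j+1) * δ)^(Module.finrank ℝ (EuclideanSpace ℝ (Fin n)))) *
              volume (Metric.ball (0:EuclideanSpace ℝ (Fin n)) 1)) := by
          rw [Measure.addHaar_ball_of_pos volume x (by positivity : (0:ℝ) < 2^(j+1)*δ)]
      _ = (ENNReal.ofReal ((2:ℝ)^n) * volume (Metric.ball (0:EuclideanSpace ℝ (Fin n)) 1)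
            * ENNReal.ofReal (δ ^ (-s))) * (ENNReal.ofReal ((2:ℝ)^(-s)))^j := by
          rw [finrank_euclideanSpace_fin]
          have hmerge : ENNReal.ofReal (((2:ℝ)^j * δ) ^ ((n:ℝ) + s))⁻¹ *
              (ENNReal.ofReal (((2:ℝ)^(j+1) * δ)^n) *
                volume (Metric.ball (0:EuclideanSpace ℝ (Fin n)) 1))
              = ENNReal.ofReal ((((2:ℝ)^j * δ) ^ ((n:ℝ) + s))⁻¹ * ((2:ℝ)^(j+1) * δ)^n) *
                volume (Metric.ball (0:EuclideanSpace ℝ (Fin n)) 1) := by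
            rw [ENNReal.ofReal_mul (by positivity), mul_assoc]
          have hmerge2 : ENNReal.ofReal ((2:ℝ)^n) *
              volume (Metric.ball (0:EuclideanSpace ℝ (Fin n)) 1) * ENNReal.ofReal (δ^(-s)) *
              (ENNReal.ofReal ((2:ℝ)^(-s)))^j
              = ENNReal.ofReal ((2:ℝ)^n * δ^(-s) * ((2:ℝ)^(-s))^j) *
                volume (Metric.ball (0:EuclideanSpace ℝ (Fin n)) 1) := by
            rw [ENNReal.ofReal_mul (by positivity), ← ENNReal.ofReal_pow (by positivity),
              ENNReal.ofReal_mul (by positivity)]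
            ring
          rw [hmerge, hmerge2]
          congr 1
          -- real computation
          have h2j : (0:ℝ) < 2^j := by positivity
          have key : ((2^j * δ) ^ ((n:ℝ) + s))⁻¹ * (2^(j+1) * δ)^n
              = 2^n * δ^(-s) * ((2:ℝ)^(-s))^j := by
            have e1 : ((2:ℝ)^j * δ) ^ ((n:ℝ) + s)
                = ((2:ℝ)^j)^((n:ℝ)+s) * δ^((n:ℝ)+s) := Real.mul_rpow h2j.le hδ.le
            have e2 : ((2:ℝ)^(j+1) * δ)^n = 2^((j+1)*n) * δ^n := by
              rw [mul_pow, ← pow_mul]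
            have e3 : ((2:ℝ)^j)^((n:ℝ)+s) = (2:ℝ)^((j:ℝ)*((n:ℝ)+s)) := by
              rw [← Real.rpow_natCast 2 j, ← Real.rpow_mul (by norm_num)]
            have e4 : δ^((n:ℝ)+s) = δ^(n:ℝ) * δ^s := by
              rw [Real.rpow_add hδ]
            have e5 : δ^(n:ℝ) = δ^n := Real.rpow_natCast δ n
            have e6 : ((2:ℝ)^(-s))^j = (2:ℝ)^(-s*(j:ℝ)) := by
              rw [← Real.rpow_natCast ((2:ℝ)^(-s)) j, ← Real.rpow_mul (by norm_num)]
            have e7 : δ^(-s) = (δ^s)⁻¹ := Real.rpow_neg hδ.le s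
            have e8 : (2:ℝ)^(-s*(j:ℝ)) = ((2:ℝ)^((j:ℝ)*s))⁻¹ := by
              rw [← Real.rpow_neg (by norm_num : (0:ℝ) ≤ 2)]
              ring_nf
            have e9 : (2:ℝ)^((j:ℝ)*((n:ℝ)+s)) = (2:ℝ)^((j:ℝ)*(n:ℝ)) * (2:ℝ)^((j:ℝ)*s) := by
              rw [← Real.rpow_add (by norm_num : (0:ℝ) < 2)]
              ring_nf
            have e10 : (2:ℝ)^((j:ℝ)*(n:ℝ)) = (2:ℝ)^(j*n) := by
              rw [← Real.rpow_natCast 2 (j*n)]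
              norm_num
            have e11 : ((2:ℝ))^((j+1)*n) = 2^(j*n) * 2^n := by
              rw [add_mul, one_mul, pow_add]
            rw [e1, e3, e9, e10, e4, e5, e2, e11, e6, e8, e7]
            have hp1 : (0:ℝ) < (2:ℝ)^(j*n) := by positivity
            have hp2 : (0:ℝ) < (2:ℝ)^((j:ℝ)*s) := Real.rpow_pos_of_pos (by norm_num) _
            have hp3 : (0:ℝ) < δ^n := by positivity
            have hp4 : (0:ℝ) < δ^s := Real.rpow_pos_of_pos hδ _
            field_simp
          rw [key]
  calc (∫⁻ y in W, ENNReal.ofReal ((dist x y ^ ((n:ℝ) + s))⁻¹))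
      ≤ ∫⁻ y in ⋃ j, A j, ENNReal.ofReal ((dist x y ^ ((n:ℝ) + s))⁻¹) :=
        lintegral_mono_set hsub
    _ ≤ ∑' j, ∫⁻ y in A j, ENNReal.ofReal ((dist x y ^ ((n:ℝ) + s))⁻¹) :=
        lintegral_iUnion_le _ _
    _ ≤ ∑' j, (ENNReal.ofReal ((2:ℝ)^n) * volume (Metric.ball (0:EuclideanSpace ℝ (Fin n)) 1)
          * ENNReal.ofReal (δ ^ (-s))) * (ENNReal.ofReal ((2:ℝ)^(-s)))^j :=
        ENNReal.tsum_le_tsum hterm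
    _ = (ENNReal.ofReal ((2:ℝ)^n) * volume (Metric.ball (0:EuclideanSpace ℝ (Fin n)) 1)
          * ENNReal.ofReal (δ ^ (-s))) * ∑' j, (ENNReal.ofReal ((2:ℝ)^(-s)))^j :=
        ENNReal.tsum_mul_left
    _ = _ := by
        rw [ENNReal.tsum_geometric]
        ring


open Metric in
lemma rpow_anti {s a b : ℝ} (hs0 : 0 < s) (ha : 0 < a) (hab : a ≤ b) :
    b^(-s) ≤ a^(-s) := by
  rw [Real.rpow_neg ha.le, Real.rpow_neg (ha.trans_le hab).le]
  exact inv_anti₀ (Real.rpow_pos_of_pos ha s) (Real.rpow_le_rpow ha.le hab hs0.le)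

lemma delta_int {n : ℕ} {Ω : Set (EuclideanSpace ℝ (Fin n))} {s : ℝ}
    (hs0 : 0 < s) (hs1 : s < 1)
    (hΩo : IsOpen Ω) (hΩb : Bornology.IsBounded Ω) (hΩlip : HasLipschitzBoundary Ω)
    (hcne : Ωᶜ.Nonempty) :
    (∫⁻ x in Ω, ENNReal.ofReal ((Metric.infDist x Ωᶜ) ^ (-s))) < ⊤ := by
  obtain ⟨r₀, hr₀, C, hCne, hlayer⟩ := layer_bound hΩo hΩb hΩlip hcne
  set r₁ := r₀ / 2 with hr₁
  have hr₁pos : 0 < r₁ := by positivity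
  set δf : EuclideanSpace ℝ (Fin n) → ℝ := fun x => Metric.infDist x Ωᶜ with hδf
  have hδfc : Continuous δf := Metric.continuous_infDist_pt Ωᶜ
  have hδfpos : ∀ x ∈ Ω, 0 < δf x := by
    intro x hx
    exact (hΩo.isClosed_compl.notMem_iff_infDist_pos hcne).mp (by simpa using hx)
  set B : Set (EuclideanSpace ℝ (Fin n)) := {x | x ∈ Ω ∧ r₁ ≤ δf x} with hB
  set L : ℕ → Set (EuclideanSpace ℝ (Fin n)) :=
    fun j => {x | x ∈ Ω ∧ r₁ * (2⁻¹:ℝ)^(j+1) ≤ δf x ∧ δf x < r₁ * (2⁻¹:ℝ)^j} with hL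
  have hBm : MeasurableSet B :=
    hΩo.measurableSet.inter ((isClosed_le continuous_const hδfc).measurableSet)
  have hLm : ∀ j, MeasurableSet (L j) := by
    intro j
    exact hΩo.measurableSet.inter (((isClosed_le continuous_const hδfc).measurableSet).inter
      ((isOpen_lt hδfc continuous_const).measurableSet))
  have hcover : Ω ⊆ B ∪ ⋃ j, L j := by
    intro x hx
    rcases le_or_gt r₁ (δf x) with hge | hlt
    · exact Or.inl ⟨hx, hge⟩
    refine Or.inr ?_
    have hδx := hδfpos x hx
    have hex : ∃ m : ℕ, r₁ * (2⁻¹:ℝ)^(m+1) ≤ δf x := by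
      obtain ⟨m, hm⟩ := exists_pow_lt_of_lt_one (show (0:ℝ) < δf x / r₁ by positivity)
        (by norm_num : (2⁻¹:ℝ) < 1)
      refine ⟨m, ?_⟩
      have h1 : (2⁻¹:ℝ)^(m+1) ≤ (2⁻¹:ℝ)^m := by
        apply pow_le_pow_of_le_one (by norm_num) (by norm_num) (Nat.le_succ m)
      have h2 : r₁ * (2⁻¹:ℝ)^m < δf x := by
        rw [lt_div_iff₀' hr₁pos] at hm
        exact hm
      nlinarith
    set j := Nat.find hex with hj
    refine Set.mem_iUnion.mpr ⟨j, hx, Nat.find_spec hex, ?_⟩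
    rcases Nat.eq_zero_or_pos j with hj0 | hjpos
    · rw [hj0]; simpa using hlt
    · obtain ⟨k, hk⟩ := Nat.exists_eq_succ_of_ne_zero hjpos.ne'
      have hnot := Nat.find_min hex (m := k) (by omega)
      push_neg at hnot
      rw [hk]
      exact hnot
  have hvolΩ : volume (closure Ω) < ⊤ :=
    (Metric.isCompact_of_isClosed_isBounded isClosed_closure hΩb.closure).measure_lt_top
  have hBbound : (∫⁻ x in B, ENNReal.ofReal (δf x ^ (-s))) < ⊤ := by
    calc (∫⁻ x in B, ENNReal.ofReal (δf x ^ (-s)))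
        ≤ ∫⁻ _ in B, ENNReal.ofReal (r₁ ^ (-s)) := by
          refine setLIntegral_mono' hBm fun x hx => ?_
          exact ENNReal.ofReal_le_ofReal (rpow_anti hs0 hr₁pos hx.2)
      _ = ENNReal.ofReal (r₁ ^ (-s)) * volume B := setLIntegral_const _ _
      _ ≤ ENNReal.ofReal (r₁ ^ (-s)) * volume (closure Ω) := by
          apply mul_le_mul_right
          exact measure_mono fun x hx => subset_closure hx.1
      _ < ⊤ := ENNReal.mul_lt_top ENNReal.ofReal_lt_top hvolΩ
  have hLbound : ∀ j : ℕ, (∫⁻ x in L j, ENNReal.ofReal (δf x ^ (-s)))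
      ≤ (C * ENNReal.ofReal ((r₁ * 2⁻¹)^(-s) * r₁)) * (ENNReal.ofReal ((2⁻¹:ℝ)^(1-s)))^j := by
    intro j
    have haj : (0:ℝ) < r₁ * (2⁻¹:ℝ)^(j+1) := by positivity
    calc (∫⁻ x in L j, ENNReal.ofReal (δf x ^ (-s)))
        ≤ ∫⁻ _ in L j, ENNReal.ofReal ((r₁ * (2⁻¹:ℝ)^(j+1)) ^ (-s)) := by
          refine setLIntegral_mono' (hLm j) fun x hx => ?_
          exact ENNReal.ofReal_le_ofReal (rpow_anti hs0 haj hx.2.1)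
      _ = ENNReal.ofReal ((r₁ * (2⁻¹:ℝ)^(j+1)) ^ (-s)) * volume (L j) :=
          setLIntegral_const _ _
      _ ≤ ENNReal.ofReal ((r₁ * (2⁻¹:ℝ)^(j+1)) ^ (-s)) *
            (C * ENNReal.ofReal (r₁ * (2⁻¹:ℝ)^j)) := by
          apply mul_le_mul_right
          have hsubL : L j ⊆ {x | x ∈ Ω ∧ Metric.infDist x Ωᶜ < r₁ * (2⁻¹:ℝ)^j} :=
            fun x hx => ⟨hx.1, hx.2.2⟩
          refine (measure_mono hsubL).trans (hlayer _ (by positivity) ?_)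
          have : (2⁻¹:ℝ)^j ≤ 1 := pow_le_one₀ (by norm_num) (by norm_num)
          nlinarith
      _ = C * ENNReal.ofReal ((r₁ * (2⁻¹:ℝ)^(j+1)) ^ (-s) * (r₁ * (2⁻¹:ℝ)^j)) := by
          rw [ENNReal.ofReal_mul (by positivity : (0:ℝ) ≤ (r₁ * (2⁻¹:ℝ)^(j+1)) ^ (-s))]
          ring
      _ = (C * ENNReal.ofReal ((r₁ * 2⁻¹)^(-s) * r₁)) * (ENNReal.ofReal ((2⁻¹:ℝ)^(1-s)))^j := by
          rw [← ENNReal.ofReal_pow (by positivity), mul_assoc,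
            ← ENNReal.ofReal_mul (by positivity)]
          congr 1
          have hq : (0:ℝ) < (2⁻¹:ℝ) := by norm_num
          have e2 : ((2⁻¹:ℝ)^j : ℝ) = (2⁻¹:ℝ)^((j:ℝ)) := (Real.rpow_natCast _ _).symm
          have e5 : ((2⁻¹:ℝ)^(1-s))^j = (2⁻¹:ℝ)^((1-s)*(j:ℝ)) := by
            rw [← Real.rpow_natCast ((2⁻¹:ℝ)^(1-s)) j, ← Real.rpow_mul hq.le]
          have e6 : ((2⁻¹:ℝ)^((j:ℝ)))^(-s) = (2⁻¹:ℝ)^((j:ℝ)*(-s)) := by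
            rw [← Real.rpow_mul hq.le]
          have e1 : (r₁ * (2⁻¹:ℝ)^(j+1))^(-s)
              = (r₁ * 2⁻¹)^(-s) * (2⁻¹:ℝ)^((j:ℝ)*(-s)) := by
            rw [show r₁ * (2⁻¹:ℝ)^(j+1) = (r₁ * 2⁻¹) * (2⁻¹:ℝ)^j by ring, e2,
              Real.mul_rpow (by positivity) (by positivity), e6]
          have e7 : (2⁻¹:ℝ)^((j:ℝ)*(-s)) * (2⁻¹:ℝ)^((j:ℝ)) = (2⁻¹:ℝ)^((1-s)*(j:ℝ)) := by
            rw [← Real.rpow_add hq]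
            ring_nf
          rw [e1, e5, e2, ← e7]
          ring
  have hgeom : (∑' j : ℕ, (C * ENNReal.ofReal ((r₁ * 2⁻¹)^(-s) * r₁)) *
      (ENNReal.ofReal ((2⁻¹:ℝ)^(1-s)))^j) < ⊤ := by
    rw [ENNReal.tsum_mul_left, ENNReal.tsum_geometric]
    have hrlt : ENNReal.ofReal ((2⁻¹:ℝ)^(1-s)) < 1 := by
      rw [← ENNReal.ofReal_one]
      apply (ENNReal.ofReal_lt_ofReal_iff one_pos).mpr
      exact Real.rpow_lt_one (by norm_num) (by norm_num) (by linarith)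
    apply ENNReal.mul_lt_top
    · exact ENNReal.mul_lt_top hCne.lt_top ENNReal.ofReal_lt_top
    · rw [ENNReal.inv_lt_top]
      exact tsub_pos_of_lt hrlt
  calc (∫⁻ x in Ω, ENNReal.ofReal (δf x ^ (-s)))
      ≤ ∫⁻ x in B ∪ ⋃ j, L j, ENNReal.ofReal (δf x ^ (-s)) := lintegral_mono_set hcover
    _ ≤ (∫⁻ x in B, ENNReal.ofReal (δf x ^ (-s)))
          + ∫⁻ x in ⋃ j, L j, ENNReal.ofReal (δf x ^ (-s)) := lintegral_union_le _ _ _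
    _ ≤ (∫⁻ x in B, ENNReal.ofReal (δf x ^ (-s)))
          + ∑' j, ∫⁻ x in L j, ENNReal.ofReal (δf x ^ (-s)) :=
        add_le_add_right (lintegral_iUnion_le _ _) _
    _ < ⊤ := by
        apply ENNReal.add_lt_top.mpr
        refine ⟨hBbound, ?_⟩
        exact lt_of_le_of_lt (ENNReal.tsum_le_tsum hLbound) hgeom

lemma tail_finite {n : ℕ} {Ω : Set (EuclideanSpace ℝ (Fin n))} {s : ℝ}
    (hs0 : 0 < s) (hs1 : s < 1)
    (hΩo : IsOpen Ω) (hΩb : Bornology.IsBounded Ω) (hΩlip : HasLipschitzBoundary Ω) :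
    (∫⁻ p in Ω ×ˢ Ωᶜ, ENNReal.ofReal ((dist p.1 p.2 ^ ((n:ℝ) + s))⁻¹)) < ⊤ := by
  rcases Set.eq_empty_or_nonempty Ωᶜ with hce | hcne
  · rw [hce, Set.prod_empty, Measure.restrict_empty, lintegral_zero_measure]
    exact ENNReal.zero_lt_top
  have hmeas : Measurable (fun p : EuclideanSpace ℝ (Fin n) × EuclideanSpace ℝ (Fin n)
      => ENNReal.ofReal ((dist p.1 p.2 ^ ((n:ℝ) + s))⁻¹)) := by
    apply ENNReal.measurable_ofReal.comp
    apply Measurable.inv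
    exact (measurable_fst.dist measurable_snd).pow measurable_const
  set c : ℝ≥0∞ := ENNReal.ofReal ((2:ℝ)^n) *
      volume (Metric.ball (0:EuclideanSpace ℝ (Fin n)) 1) *
      (1 - ENNReal.ofReal ((2:ℝ)^(-s)))⁻¹ with hc
  have hcfin : c ≠ ⊤ := by
    rw [hc]
    refine (ENNReal.mul_lt_top (ENNReal.mul_lt_top ENNReal.ofReal_lt_top
      measure_ball_lt_top) ?_).ne
    rw [ENNReal.inv_lt_top]
    apply tsub_pos_of_lt
    rw [← ENNReal.ofReal_one]
    apply (ENNReal.ofReal_lt_ofReal_iff one_pos).mpr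
    exact Real.rpow_lt_one_of_one_lt_of_neg (by norm_num) (by linarith)
  have hprod : ((volume : Measure (EuclideanSpace ℝ (Fin n) × EuclideanSpace ℝ (Fin n))).restrict
      (Ω ×ˢ Ωᶜ)) = ((volume.restrict Ω).prod (volume.restrict Ωᶜ)) := by
    rw [Measure.volume_eq_prod, Measure.prod_restrict]
  rw [hprod, lintegral_prod _ hmeas.aemeasurable]
  have hbound : ∀ x ∈ Ω, (∫⁻ y in Ωᶜ, ENNReal.ofReal ((dist x y ^ ((n:ℝ) + s))⁻¹))
      ≤ c * ENNReal.ofReal ((Metric.infDist x Ωᶜ) ^ (-s)) := by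
    intro x hx
    have hδpos : 0 < Metric.infDist x Ωᶜ :=
      (hΩo.isClosed_compl.notMem_iff_infDist_pos hcne).mp (by simpa using hx)
    exact annuli_bound hs0 Ωᶜ x hδpos (fun y hy => Metric.infDist_le_dist_of_mem hy)
  calc (∫⁻ x in Ω, ∫⁻ y in Ωᶜ, ENNReal.ofReal ((dist x y ^ ((n:ℝ) + s))⁻¹))
      ≤ ∫⁻ x in Ω, c * ENNReal.ofReal ((Metric.infDist x Ωᶜ) ^ (-s)) :=
        setLIntegral_mono' hΩo.measurableSet hbound
    _ = c * ∫⁻ x in Ω, ENNReal.ofReal ((Metric.infDist x Ωᶜ) ^ (-s)) := by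
        rw [lintegral_const_mul]
        exact ENNReal.measurable_ofReal.comp
          ((Metric.continuous_infDist_pt Ωᶜ).measurable.pow measurable_const)
    _ < ⊤ := ENNReal.mul_lt_top hcfin.lt_top (delta_int hs0 hs1 hΩo hΩb hΩlip hcne)


section helpers

lemma div_le_div_nonneg_right {a b c : ℝ} (hab : a ≤ b) (hc : 0 ≤ c) : a / c ≤ b / c := by
  rcases hc.eq_or_lt with rfl | hc'
  · simp
  · exact (div_le_div_iff_of_pos_right hc').mpr hab

lemma clamp_sub_le (N a b : ℝ) :
    |max (-N) (min N a) - max (-N) (min N b)| ≤ |a - b| := by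
  have h1 : |max (-N) (min N a) - max (-N) (min N b)|
      = |max (min N a) (-N) - max (min N b) (-N)| := by rw [max_comm (-N) _, max_comm (-N) _]
  rw [h1]
  refine (abs_max_sub_max_le_abs _ _ _).trans ?_
  have := abs_min_sub_min_le_max N a N b
  simpa using this

lemma clamp_mem (N t : ℝ) (hN : 0 ≤ N) :
    min 0 t ≤ max (-N) (min N t) ∧ max (-N) (min N t) ≤ max 0 t := by
  rcases le_total 0 t with h | h
  · have h1 : 0 ≤ min N t := le_min hN h
    have h2 : max (-N) (min N t) = min N t := max_eq_right ((neg_nonpos.mpr hN).trans h1)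
    rw [h2]
    exact ⟨(min_le_left 0 t).trans h1, (min_le_right N t).trans (le_max_right 0 t)⟩
  · have h1 : min N t = t := min_eq_right (h.trans hN)
    rw [h1]
    constructor
    · exact (min_le_right 0 t).trans (le_max_right (-N) t)
    · exact max_le ((neg_nonpos.mpr hN).trans (le_max_left 0 t)) (h.trans (le_max_left 0 t))

lemma clamp_abs_le_abs (N t : ℝ) (hN : 0 ≤ N) : |max (-N) (min N t)| ≤ |t| := by
  obtain ⟨h1, h2⟩ := clamp_mem N t hN
  rw [abs_le]
  rcases le_total 0 t with h | h
  · rw [min_eq_left h] at h1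
    rw [max_eq_right h] at h2
    exact ⟨by linarith [abs_nonneg t], h2.trans (le_abs_self t)⟩
  · rw [min_eq_right h] at h1
    rw [max_eq_left h] at h2
    constructor
    · calc -|t| = t := by rw [abs_of_nonpos h]; ring
        _ ≤ _ := h1
    · exact h2.trans (abs_nonneg t)

lemma clamp_eq (N t : ℝ) (h : |t| ≤ N) : max (-N) (min N t) = t := by
  rw [abs_le] at h
  rw [min_eq_right h.2, max_eq_right h.1]

lemma seg_abs {x y a b : ℝ} (h1 : min x y ≤ a) (h2 : a ≤ max x y) :
    |a - b| ≤ max (|x - b|) (|y - b|) := by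
  rw [abs_sub_le_iff]
  constructor
  · calc a - b ≤ max x y - b := by linarith
      _ ≤ max (x - b) (y - b) := by rcases le_total x y with h|h <;> simp [max_eq_right, max_eq_left, h] <;> linarith
      _ ≤ max (|x - b|) (|y - b|) := max_le_max (le_abs_self _) (le_abs_self _)
  · calc b - a ≤ b - min x y := by linarith
      _ ≤ max (b - x) (b - y) := by rcases le_total x y with h|h <;> simp [min_eq_left, min_eq_right, h] <;> linarith
      _ ≤ max (|x - b|) (|y - b|) := by
          apply max_le_max
          · rw [abs_sub_comm]; exact le_abs_self _
          · rw [abs_sub_comm]; exact le_abs_self _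

lemma clamp_between (N a b : ℝ) (hN : 0 ≤ N) :
    min b a ≤ a - max (-N) (min N (a - b)) ∧ a - max (-N) (min N (a - b)) ≤ max b a := by
  obtain ⟨h1, h2⟩ := clamp_mem N (a - b) hN
  rcases le_total b a with h | h
  · have hm : max 0 (a-b) = a - b := max_eq_right (by linarith)
    have hn : min 0 (a-b) = 0 := min_eq_left (by linarith)
    rw [hm] at h2
    rw [hn] at h1
    rw [min_eq_left h, max_eq_right h]
    exact ⟨by linarith, by linarith⟩
  · have hm : max 0 (a-b) = 0 := max_eq_left (by linarith)
    have hn : min 0 (a-b) = a - b := min_eq_right (by linarith)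
    rw [hm] at h2
    rw [hn] at h1
    rw [min_eq_right h, max_eq_left h]
    exact ⟨by linarith, by linarith⟩

end helpers

lemma gagliardo_prod {n : ℕ} (Ω : Set (EuclideanSpace ℝ (Fin n))) (s : ℝ)
    (φ : EuclideanSpace ℝ (Fin n) → ℝ) (hφ : Measurable φ) :
    gagliardoIntegral Ω s 1 φ =
      ∫⁻ p in Ω ×ˢ Ω, ENNReal.ofReal (|φ p.1 - φ p.2| / dist p.1 p.2 ^ ((n:ℝ) + s)) := by
  unfold gagliardoIntegral
  have hmeas : Measurable (fun p : EuclideanSpace ℝ (Fin n) × EuclideanSpace ℝ (Fin n) =>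
      ENNReal.ofReal (|φ p.1 - φ p.2| / dist p.1 p.2 ^ ((n:ℝ) + s))) := by
    apply ENNReal.measurable_ofReal.comp
    exact ((hφ.comp measurable_fst).sub (hφ.comp measurable_snd)).abs.div
      ((measurable_fst.dist measurable_snd).pow measurable_const)
  rw [show ((volume : Measure (EuclideanSpace ℝ (Fin n) × EuclideanSpace ℝ (Fin n))).restrict
      (Ω ×ˢ Ω)) = ((volume.restrict Ω).prod (volume.restrict Ω)) by
    rw [Measure.volume_eq_prod, Measure.prod_restrict]]
  rw [lintegral_prod _ hmeas.aemeasurable]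
  simp only [Real.rpow_one, mul_one]

lemma tail_swap {n : ℕ} (A B : Set (EuclideanSpace ℝ (Fin n))) (c : ℝ) :
    (∫⁻ p in B ×ˢ A, ENNReal.ofReal ((dist p.1 p.2 ^ c)⁻¹))
      = ∫⁻ p in A ×ˢ B, ENNReal.ofReal ((dist p.1 p.2 ^ c)⁻¹) := by
  have hmeas : Measurable (fun p : EuclideanSpace ℝ (Fin n) × EuclideanSpace ℝ (Fin n) =>
      ENNReal.ofReal ((dist p.1 p.2 ^ c)⁻¹)) := by
    apply ENNReal.measurable_ofReal.comp
    exact ((measurable_fst.dist measurable_snd).pow measurable_const).inv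
  have h1 : (volume : Measure (EuclideanSpace ℝ (Fin n) × EuclideanSpace ℝ (Fin n))).restrict
      (B ×ˢ A) = Measure.map Prod.swap ((volume : Measure (EuclideanSpace ℝ (Fin n) ×
        EuclideanSpace ℝ (Fin n))).restrict (A ×ˢ B)) := by
    rw [Measure.volume_eq_prod, ← Measure.prod_restrict, ← Measure.prod_restrict,
      Measure.prod_swap]
  rw [h1, lintegral_map hmeas measurable_swap]
  congr 1
  funext p
  simp only [Prod.snd_swap, Prod.fst_swap, Prod.swap]
  rw [dist_comm]


open Metric in
theorem stmt12 {n : ℕ} (Ω : Set (EuclideanSpace ℝ (Fin n)))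
    (hΩo : IsOpen Ω) (hΩb : Bornology.IsBounded Ω) (hΩlip : HasLipschitzBoundary Ω)
    (s : ℝ) (hs : s ∈ Set.Ioo (0 : ℝ) 1)
    (u : EuclideanSpace ℝ (Fin n) → ℝ) (hu : Measurable u)
    (huL1 : (∫⁻ x in Ω, ENNReal.ofReal |u x|) < ⊤) (huG : gagliardoIntegral Ω s 1 u < ⊤)
    -- the vector field `z` witnessing that `u` is a weak solution of `(-Δ)₁^s u = 0` in `Ω`
    (z : EuclideanSpace ℝ (Fin n) × EuclideanSpace ℝ (Fin n) → ℝ) (hzm : Measurable z)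
    (hz1 : ∀ pr, |z pr| ≤ 1) (hzanti : ∀ x y, z (x, y) = - z (y, x))
    (hzu : ∀ᵐ pr ∂(volume.restrict (QΩ Ω)), z pr * (u pr.1 - u pr.2) = |u pr.1 - u pr.2|)
    (hzeq : ∀ w : EuclideanSpace ℝ (Fin n) → ℝ, Measurable w →
      (∫⁻ x in Ω, ENNReal.ofReal |w x|) < ⊤ → gagliardoIntegral Ω s 1 w < ⊤ →
      (∀ᵐ y ∂(volume.restrict Ωᶜ), w y = 0) →
      (∫ pr in QΩ Ω, z pr * (w pr.1 - w pr.2) / dist pr.1 pr.2 ^ ((n : ℝ) + s)) = 0) :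
    -- then `u` is an s-minimal function in `Ω`
    ∀ v : EuclideanSpace ℝ (Fin n) → ℝ, Measurable v →
      (∫⁻ x in Ω, ENNReal.ofReal |v x|) < ⊤ → gagliardoIntegral Ω s 1 v < ⊤ →
      (∀ᵐ y ∂(volume.restrict Ωᶜ), v y = u y) →
      (∫ pr in QΩ Ω,
        (|u pr.1 - u pr.2| - |v pr.1 - v pr.2|) / dist pr.1 pr.2 ^ ((n : ℝ) + s)) ≤ 0 := by
  classical
  intro v hvm hvL1 hvG hvu
  obtain ⟨hs0, hs1⟩ := hs
  have mΩ : MeasurableSet Ω := hΩo.measurableSet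
  have mQ : MeasurableSet (QΩ Ω) := by
    have hQ : QΩ Ω = (Ω ×ˢ (Set.univ : Set (EuclideanSpace ℝ (Fin n))))
        ∪ ((Set.univ : Set (EuclideanSpace ℝ (Fin n))) ×ˢ Ω) := by
      ext p
      simp [QΩ, Set.mem_prod]
    rw [hQ]
    exact (mΩ.prod MeasurableSet.univ).union (MeasurableSet.univ.prod mΩ)
  set ρ := (volume : Measure (EuclideanSpace ℝ (Fin n) ×
    EuclideanSpace ℝ (Fin n))).restrict (QΩ Ω) with hρ
  set f : EuclideanSpace ℝ (Fin n) × EuclideanSpace ℝ (Fin n) → ℝ :=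
    fun p => (|u p.1 - u p.2| - |v p.1 - v p.2|) / dist p.1 p.2 ^ ((n:ℝ) + s) with hf
  -- measurability of building blocks
  have hdm : Measurable (fun p : EuclideanSpace ℝ (Fin n) × EuclideanSpace ℝ (Fin n) =>
      dist p.1 p.2 ^ ((n:ℝ) + s)) := (measurable_fst.dist measurable_snd).pow measurable_const
  have hdp0 : ∀ p : EuclideanSpace ℝ (Fin n) × EuclideanSpace ℝ (Fin n),
      0 ≤ dist p.1 p.2 ^ ((n:ℝ) + s) := fun p => Real.rpow_nonneg dist_nonneg _
  have hum : Measurable (fun p : EuclideanSpace ℝ (Fin n) × EuclideanSpace ℝ (Fin n) =>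
      |u p.1 - u p.2|) := ((hu.comp measurable_fst).sub (hu.comp measurable_snd)).abs
  have hvmp : Measurable (fun p : EuclideanSpace ℝ (Fin n) × EuclideanSpace ℝ (Fin n) =>
      |v p.1 - v p.2|) := ((hvm.comp measurable_fst).sub (hvm.comp measurable_snd)).abs
  have hfm : Measurable f := (hum.sub hvmp).div hdm
  -- finite lintegral pieces
  have hIu : (∫⁻ p in Ω ×ˢ Ω,
      ENNReal.ofReal (|u p.1 - u p.2| / dist p.1 p.2 ^ ((n:ℝ) + s))) < ⊤ := by
    rw [← gagliardo_prod Ω s u hu]; exact huG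
  have hIv : (∫⁻ p in Ω ×ˢ Ω,
      ENNReal.ofReal (|v p.1 - v p.2| / dist p.1 p.2 ^ ((n:ℝ) + s))) < ⊤ := by
    rw [← gagliardo_prod Ω s v hvm]; exact hvG
  have hIt1 : (∫⁻ p in Ω ×ˢ Ωᶜ,
      ENNReal.ofReal ((dist p.1 p.2 ^ ((n:ℝ) + s))⁻¹)) < ⊤ :=
    tail_finite hs0 hs1 hΩo hΩb hΩlip
  have hIt2 : (∫⁻ p in Ωᶜ ×ˢ Ω,
      ENNReal.ofReal ((dist p.1 p.2 ^ ((n:ℝ) + s))⁻¹)) < ⊤ := by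
    rw [tail_swap]; exact hIt1
  -- master integrability criterion
  have key_int : ∀ (φ : EuclideanSpace ℝ (Fin n) × EuclideanSpace ℝ (Fin n) → ℝ),
      Measurable φ → ∀ a : ℝ, 0 ≤ a →
      (∀ p, |φ p| ≤ (3*(|u p.1 - u p.2| + |v p.1 - v p.2|)) / dist p.1 p.2 ^ ((n:ℝ) + s)) →
      (∀ p, ¬(p.1 ∈ Ω ∧ p.2 ∈ Ω) → |φ p| ≤ a * (dist p.1 p.2 ^ ((n:ℝ) + s))⁻¹) →
      Integrable φ ρ := by
    intro φ hφm a ha hb1 hb2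
    refine ⟨hφm.aestronglyMeasurable, ?_⟩
    rw [hasFiniteIntegral_iff_norm]
    have hsub : QΩ Ω ⊆ (Ω ×ˢ Ω) ∪ ((Ω ×ˢ Ωᶜ) ∪ (Ωᶜ ×ˢ Ω)) := by
      intro p hp
      by_cases h1 : p.1 ∈ Ω <;> by_cases h2 : p.2 ∈ Ω
      · exact Or.inl ⟨h1, h2⟩
      · exact Or.inr (Or.inl ⟨h1, h2⟩)
      · exact Or.inr (Or.inr ⟨h1, h2⟩)
      · rcases hp with h | h
        · exact absurd h h1
        · exact absurd h h2
    have hA : (∫⁻ p in Ω ×ˢ Ω, ENNReal.ofReal ‖φ p‖) < ⊤ := by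
      have hpt : ∀ p : EuclideanSpace ℝ (Fin n) × EuclideanSpace ℝ (Fin n),
          ENNReal.ofReal ‖φ p‖ ≤
            3 * ENNReal.ofReal (|u p.1 - u p.2| / dist p.1 p.2 ^ ((n:ℝ) + s))
            + 3 * ENNReal.ofReal (|v p.1 - v p.2| / dist p.1 p.2 ^ ((n:ℝ) + s)) := by
        intro p
        have h1 : ‖φ p‖ = |φ p| := Real.norm_eq_abs _
        have h2 : (3*(|u p.1 - u p.2| + |v p.1 - v p.2|)) / dist p.1 p.2 ^ ((n:ℝ) + s)
            = 3*(|u p.1 - u p.2| / dist p.1 p.2 ^ ((n:ℝ) + s))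
              + 3*(|v p.1 - v p.2| / dist p.1 p.2 ^ ((n:ℝ) + s)) := by ring
        calc ENNReal.ofReal ‖φ p‖ ≤ ENNReal.ofReal
              ((3*(|u p.1 - u p.2| + |v p.1 - v p.2|)) / dist p.1 p.2 ^ ((n:ℝ) + s)) := by
              rw [h1]; exact ENNReal.ofReal_le_ofReal (hb1 p)
          _ = ENNReal.ofReal (3*(|u p.1 - u p.2| / dist p.1 p.2 ^ ((n:ℝ) + s))
              + 3*(|v p.1 - v p.2| / dist p.1 p.2 ^ ((n:ℝ) + s))) := by rw [h2]
          _ ≤ ENNReal.ofReal (3*(|u p.1 - u p.2| / dist p.1 p.2 ^ ((n:ℝ) + s)))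
              + ENNReal.ofReal (3*(|v p.1 - v p.2| / dist p.1 p.2 ^ ((n:ℝ) + s))) :=
            ENNReal.ofReal_add_le
          _ = 3 * ENNReal.ofReal (|u p.1 - u p.2| / dist p.1 p.2 ^ ((n:ℝ) + s))
              + 3 * ENNReal.ofReal (|v p.1 - v p.2| / dist p.1 p.2 ^ ((n:ℝ) + s)) := by
            rw [ENNReal.ofReal_mul (by norm_num), ENNReal.ofReal_mul (by norm_num),
              ENNReal.ofReal_ofNat]
      calc (∫⁻ p in Ω ×ˢ Ω, ENNReal.ofReal ‖φ p‖)
          ≤ ∫⁻ p in Ω ×ˢ Ω,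
            (3 * ENNReal.ofReal (|u p.1 - u p.2| / dist p.1 p.2 ^ ((n:ℝ) + s))
              + 3 * ENNReal.ofReal (|v p.1 - v p.2| / dist p.1 p.2 ^ ((n:ℝ) + s))) :=
            lintegral_mono hpt
        _ = 3 * (∫⁻ p in Ω ×ˢ Ω, ENNReal.ofReal (|u p.1 - u p.2| / dist p.1 p.2 ^ ((n:ℝ) + s)))
            + 3 * ∫⁻ p in Ω ×ˢ Ω, ENNReal.ofReal (|v p.1 - v p.2| / dist p.1 p.2 ^ ((n:ℝ) + s)) := by
            rw [lintegral_add_left, lintegral_const_mul, lintegral_const_mul]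
            · exact ENNReal.measurable_ofReal.comp (hvmp.div hdm)
            · exact ENNReal.measurable_ofReal.comp (hum.div hdm)
            · exact (ENNReal.measurable_ofReal.comp (hum.div hdm)).const_mul 3
        _ < ⊤ := by
            apply ENNReal.add_lt_top.mpr
            constructor
            · exact ENNReal.mul_lt_top (by norm_num) hIu
            · exact ENNReal.mul_lt_top (by norm_num) hIv
    have hoff : ∀ (W1 W2 : Set (EuclideanSpace ℝ (Fin n))), MeasurableSet W1 →
        (∀ p : EuclideanSpace ℝ (Fin n) × EuclideanSpace ℝ (Fin n),
          p ∈ W1 ×ˢ W2 → ¬(p.1 ∈ Ω ∧ p.2 ∈ Ω)) → MeasurableSet W2 →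
        (∫⁻ p in W1 ×ˢ W2, ENNReal.ofReal ((dist p.1 p.2 ^ ((n:ℝ) + s))⁻¹)) < ⊤ →
        (∫⁻ p in W1 ×ˢ W2, ENNReal.ofReal ‖φ p‖) < ⊤ := by
      intro W1 W2 hW1 hW12 hW2 hfin
      calc (∫⁻ p in W1 ×ˢ W2, ENNReal.ofReal ‖φ p‖)
          ≤ ∫⁻ p in W1 ×ˢ W2, ENNReal.ofReal (a * (dist p.1 p.2 ^ ((n:ℝ) + s))⁻¹) := by
            refine setLIntegral_mono' (hW1.prod hW2) fun p hp => ?_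
            rw [Real.norm_eq_abs]
            exact ENNReal.ofReal_le_ofReal (hb2 p (hW12 p hp))
        _ = ENNReal.ofReal a * ∫⁻ p in W1 ×ˢ W2,
              ENNReal.ofReal ((dist p.1 p.2 ^ ((n:ℝ) + s))⁻¹) := by
            rw [← lintegral_const_mul]
            · congr 1
              funext p
              rw [← ENNReal.ofReal_mul ha]
            · exact ENNReal.measurable_ofReal.comp (hdm.inv)
        _ < ⊤ := ENNReal.mul_lt_top ENNReal.ofReal_lt_top hfin
    calc (∫⁻ p, ENNReal.ofReal ‖φ p‖ ∂ρ)
        ≤ ∫⁻ p in (Ω ×ˢ Ω) ∪ ((Ω ×ˢ Ωᶜ) ∪ (Ωᶜ ×ˢ Ω)), ENNReal.ofReal ‖φ p‖ := by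
          rw [hρ]; exact lintegral_mono_set hsub
      _ ≤ (∫⁻ p in Ω ×ˢ Ω, ENNReal.ofReal ‖φ p‖)
          + ((∫⁻ p in Ω ×ˢ Ωᶜ, ENNReal.ofReal ‖φ p‖)
            + (∫⁻ p in Ωᶜ ×ˢ Ω, ENNReal.ofReal ‖φ p‖)) :=
          le_trans (lintegral_union_le _ _ _) (add_le_add_right (lintegral_union_le _ _ _) _)
      _ < ⊤ := by
          refine ENNReal.add_lt_top.mpr ⟨hA, ENNReal.add_lt_top.mpr ⟨?_, ?_⟩⟩
          · exact hoff Ω Ωᶜ mΩ (fun p hp h => hp.2 h.2) mΩ.compl hIt1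
          · exact hoff Ωᶜ Ω mΩ.compl (fun p hp h => hp.1 h.1) mΩ hIt2

  -- truncations
  set w : EuclideanSpace ℝ (Fin n) → ℝ := fun x => u x - v x with hw
  have hwm : Measurable w := hu.sub hvm
  set wN : ℕ → EuclideanSpace ℝ (Fin n) → ℝ :=
    fun N x => max (-(N:ℝ)) (min (N:ℝ) (w x)) with hwN
  have hwNm : ∀ N, Measurable (wN N) := fun N =>
    measurable_const.max (measurable_const.min hwm)
  set vN : ℕ → EuclideanSpace ℝ (Fin n) → ℝ := fun N x => u x - wN N x with hvN
  have hvNm : ∀ N, Measurable (vN N) := fun N => hu.sub (hwNm N)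
  set fN : ℕ → EuclideanSpace ℝ (Fin n) × EuclideanSpace ℝ (Fin n) → ℝ :=
    fun N p => (|u p.1 - u p.2| - |vN N p.1 - vN N p.2|) / dist p.1 p.2 ^ ((n:ℝ) + s) with hfN
  set gN : ℕ → EuclideanSpace ℝ (Fin n) × EuclideanSpace ℝ (Fin n) → ℝ :=
    fun N p => z p * (wN N p.1 - wN N p.2) / dist p.1 p.2 ^ ((n:ℝ) + s) with hgN
  have hfNm : ∀ N, Measurable (fN N) := fun N =>
    (hum.sub (((hvNm N).comp measurable_fst).sub ((hvNm N).comp measurable_snd)).abs).div hdm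
  have hgNm : ∀ N, Measurable (gN N) := fun N =>
    (hzm.mul (((hwNm N).comp measurable_fst).sub ((hwNm N).comp measurable_snd))).div hdm
  -- pointwise facts about truncations
  have hwd_uv : ∀ x y, |w x - w y| ≤ |u x - u y| + |v x - v y| := by
    intro x y
    have : w x - w y = (u x - u y) - (v x - v y) := by rw [hw]; ring
    rw [this]
    exact abs_sub _ _
  have hwN_bound : ∀ (N : ℕ) x, |wN N x| ≤ (N:ℝ) := by
    intro N x
    rw [hwN]
    rw [abs_le]
    constructor
    · exact le_max_left _ _
    · exact max_le (neg_le_self (Nat.cast_nonneg N)) (min_le_left _ _)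
  have hwNd : ∀ (N : ℕ) x y, |wN N x - wN N y| ≤ |w x - w y| := by
    intro N x y
    rw [hwN]
    exact clamp_sub_le _ _ _
  -- the equation for the truncations
  have hz0 : ∀ N : ℕ, (∫ p, gN N p ∂ρ) = 0 := by
    intro N
    refine hzeq (wN N) (hwNm N) ?_ ?_ ?_
    · calc (∫⁻ x in Ω, ENNReal.ofReal |wN N x|)
          ≤ ∫⁻ x in Ω, (ENNReal.ofReal |u x| + ENNReal.ofReal |v x|) := by
            apply lintegral_mono
            intro x
            calc ENNReal.ofReal |wN N x| ≤ ENNReal.ofReal |w x| := by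
                  apply ENNReal.ofReal_le_ofReal
                  rw [hwN]
                  exact clamp_abs_le_abs _ _ (Nat.cast_nonneg N)
              _ ≤ ENNReal.ofReal (|u x| + |v x|) := by
                  apply ENNReal.ofReal_le_ofReal
                  rw [hw]
                  exact abs_sub _ _
              _ ≤ ENNReal.ofReal |u x| + ENNReal.ofReal |v x| := ENNReal.ofReal_add_le
        _ = (∫⁻ x in Ω, ENNReal.ofReal |u x|) + ∫⁻ x in Ω, ENNReal.ofReal |v x| :=
            lintegral_add_left (ENNReal.measurable_ofReal.comp hu.abs) _
        _ < ⊤ := ENNReal.add_lt_top.mpr ⟨huL1, hvL1⟩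
    · rw [gagliardo_prod Ω s _ (hwNm N)]
      calc (∫⁻ p in Ω ×ˢ Ω,
            ENNReal.ofReal (|wN N p.1 - wN N p.2| / dist p.1 p.2 ^ ((n:ℝ) + s)))
          ≤ ∫⁻ p in Ω ×ˢ Ω,
              (ENNReal.ofReal (|u p.1 - u p.2| / dist p.1 p.2 ^ ((n:ℝ) + s))
              + ENNReal.ofReal (|v p.1 - v p.2| / dist p.1 p.2 ^ ((n:ℝ) + s))) := by
            apply lintegral_mono
            intro p
            calc ENNReal.ofReal (|wN N p.1 - wN N p.2| / dist p.1 p.2 ^ ((n:ℝ) + s))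
                ≤ ENNReal.ofReal ((|u p.1 - u p.2| + |v p.1 - v p.2|)
                    / dist p.1 p.2 ^ ((n:ℝ) + s)) := by
                  apply ENNReal.ofReal_le_ofReal
                  exact div_le_div_nonneg_right
                    ((hwNd N p.1 p.2).trans (hwd_uv p.1 p.2)) (hdp0 p)
              _ = ENNReal.ofReal (|u p.1 - u p.2| / dist p.1 p.2 ^ ((n:ℝ) + s)
                  + |v p.1 - v p.2| / dist p.1 p.2 ^ ((n:ℝ) + s)) := by rw [add_div]
              _ ≤ _ := ENNReal.ofReal_add_le
        _ = (∫⁻ p in Ω ×ˢ Ω, ENNReal.ofReal (|u p.1 - u p.2| / dist p.1 p.2 ^ ((n:ℝ) + s)))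
            + ∫⁻ p in Ω ×ˢ Ω, ENNReal.ofReal (|v p.1 - v p.2| / dist p.1 p.2 ^ ((n:ℝ) + s)) :=
            lintegral_add_left (ENNReal.measurable_ofReal.comp (hum.div hdm)) _
        _ < ⊤ := ENNReal.add_lt_top.mpr ⟨hIu, hIv⟩
    · filter_upwards [hvu] with y hy
      have hwy : w y = 0 := by rw [hw]; dsimp only; rw [hy]; ring
      rw [hwN]
      dsimp only
      rw [hwy]
      exact clamp_eq _ 0 (by simp)
  -- abs bounds for fN, gN
  have habs_fN : ∀ (N : ℕ) p, |fN N p| ≤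
      |wN N p.1 - wN N p.2| / dist p.1 p.2 ^ ((n:ℝ) + s) := by
    intro N p
    rw [hfN]
    dsimp only
    rw [abs_div, abs_of_nonneg (hdp0 p)]
    apply div_le_div_nonneg_right ?_ (hdp0 p)
    have hkey : (u p.1 - u p.2) - (vN N p.1 - vN N p.2) = wN N p.1 - wN N p.2 := by
      rw [hvN]; ring
    calc |(|u p.1 - u p.2| - |vN N p.1 - vN N p.2|)|
        ≤ |(u p.1 - u p.2) - (vN N p.1 - vN N p.2)| := abs_abs_sub_abs_le_abs_sub _ _
      _ = |wN N p.1 - wN N p.2| := by rw [hkey]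
  have habs_gN : ∀ (N : ℕ) p, |gN N p| ≤
      |wN N p.1 - wN N p.2| / dist p.1 p.2 ^ ((n:ℝ) + s) := by
    intro N p
    rw [hgN]
    dsimp only
    rw [abs_div, abs_of_nonneg (hdp0 p)]
    apply div_le_div_nonneg_right ?_ (hdp0 p)
    calc |z p * (wN N p.1 - wN N p.2)| = |z p| * |wN N p.1 - wN N p.2| := abs_mul _ _
      _ ≤ 1 * |wN N p.1 - wN N p.2| := mul_le_mul_of_nonneg_right (hz1 p) (abs_nonneg _)
      _ = |wN N p.1 - wN N p.2| := one_mul _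
  -- integrability of fN and gN
  have hbound_in : ∀ (N : ℕ) (p : EuclideanSpace ℝ (Fin n) × EuclideanSpace ℝ (Fin n)), |wN N p.1 - wN N p.2| / dist p.1 p.2 ^ ((n:ℝ) + s)
      ≤ (3*(|u p.1 - u p.2| + |v p.1 - v p.2|)) / dist p.1 p.2 ^ ((n:ℝ) + s) := by
    intro N p
    apply div_le_div_nonneg_right ?_ (hdp0 p)
    calc |wN N p.1 - wN N p.2| ≤ |w p.1 - w p.2| := hwNd N p.1 p.2
      _ ≤ |u p.1 - u p.2| + |v p.1 - v p.2| := hwd_uv p.1 p.2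
      _ ≤ 3*(|u p.1 - u p.2| + |v p.1 - v p.2|) := by
          nlinarith [abs_nonneg (u p.1 - u p.2), abs_nonneg (v p.1 - v p.2)]
  have hbound_off : ∀ (N : ℕ) (p : EuclideanSpace ℝ (Fin n) × EuclideanSpace ℝ (Fin n)), |wN N p.1 - wN N p.2| / dist p.1 p.2 ^ ((n:ℝ) + s)
      ≤ (2*(N:ℝ)) * (dist p.1 p.2 ^ ((n:ℝ) + s))⁻¹ := by
    intro N p
    rw [div_eq_mul_inv]
    apply mul_le_mul_of_nonneg_right ?_ (inv_nonneg.mpr (hdp0 p))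
    calc |wN N p.1 - wN N p.2| ≤ |wN N p.1| + |wN N p.2| := abs_sub _ _
      _ ≤ (N:ℝ) + (N:ℝ) := add_le_add (hwN_bound N p.1) (hwN_bound N p.2)
      _ = 2*(N:ℝ) := by ring
  have hfNint : ∀ N : ℕ, Integrable (fN N) ρ := by
    intro N
    refine key_int _ (hfNm N) (2*(N:ℝ)) (by positivity) ?_ ?_
    · exact fun p => (habs_fN N p).trans (hbound_in N p)
    · exact fun p _ => (habs_fN N p).trans (hbound_off N p)
  have hgNint : ∀ N : ℕ, Integrable (gN N) ρ := by
    intro N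
    refine key_int _ (hgNm N) (2*(N:ℝ)) (by positivity) ?_ ?_
    · exact fun p => (habs_gN N p).trans (hbound_in N p)
    · exact fun p _ => (habs_gN N p).trans (hbound_off N p)
  -- a.e. inequality fN ≤ gN
  have hle : ∀ N : ℕ, fN N ≤ᵐ[ρ] gN N := by
    intro N
    filter_upwards [hzu] with p hp
    show fN N p ≤ gN N p
    rw [hfN, hgN]
    dsimp only
    apply div_le_div_nonneg_right ?_ (hdp0 p)
    have hdecomp : wN N p.1 - wN N p.2 = (u p.1 - u p.2) - (vN N p.1 - vN N p.2) := by
      rw [hvN]; ring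
    have heq : z p * (wN N p.1 - wN N p.2)
        = |u p.1 - u p.2| - z p * (vN N p.1 - vN N p.2) := by
      rw [hdecomp, mul_sub, hp]
    rw [heq]
    have hzv : z p * (vN N p.1 - vN N p.2) ≤ |vN N p.1 - vN N p.2| := by
      calc z p * (vN N p.1 - vN N p.2) ≤ |z p * (vN N p.1 - vN N p.2)| := le_abs_self _
        _ = |z p| * |vN N p.1 - vN N p.2| := abs_mul _ _
        _ ≤ 1 * |vN N p.1 - vN N p.2| := mul_le_mul_of_nonneg_right (hz1 p) (abs_nonneg _)
        _ = |vN N p.1 - vN N p.2| := one_mul _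
    linarith
  -- per N: ∫ fN ≤ 0
  have hintfN : ∀ N : ℕ, (∫ p, fN N p ∂ρ) ≤ 0 := by
    intro N
    calc (∫ p, fN N p ∂ρ) ≤ ∫ p, gN N p ∂ρ :=
        integral_mono_ae (hfNint N) (hgNint N) (hle N)
      _ = 0 := hz0 N
  -- the dominating function G
  set ψ : EuclideanSpace ℝ (Fin n) × EuclideanSpace ℝ (Fin n) → ℝ :=
    fun p => (3*(|u p.1 - u p.2| + |v p.1 - v p.2|)) / dist p.1 p.2 ^ ((n:ℝ) + s) with hψ
  have hψm : Measurable ψ := ((hum.add hvmp).const_mul 3).div hdm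
  have hψ0 : ∀ p, 0 ≤ ψ p := by
    intro p
    rw [hψ]
    have h1 : (0:ℝ) ≤ 3*(|u p.1 - u p.2| + |v p.1 - v p.2|) := by positivity
    exact div_nonneg h1 (hdp0 p)
  -- |f| ≤ ψ everywhere
  have hfψ : ∀ p, |f p| ≤ ψ p := by
    intro p
    rw [hf, hψ]
    dsimp only
    rw [abs_div, abs_of_nonneg (hdp0 p)]
    apply div_le_div_nonneg_right ?_ (hdp0 p)
    calc |(|u p.1 - u p.2| - |v p.1 - v p.2|)| ≤ |u p.1 - u p.2| + |v p.1 - v p.2| := by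
          refine (abs_sub _ _).trans ?_
          rw [abs_abs, abs_abs]
      _ ≤ 3*(|u p.1 - u p.2| + |v p.1 - v p.2|) := by
          nlinarith [abs_nonneg (u p.1 - u p.2), abs_nonneg (v p.1 - v p.2)]
  have hfNψ : ∀ (N : ℕ) p, |fN N p| ≤ ψ p := by
    intro N p
    have h := (habs_fN N p).trans (hbound_in N p)
    simpa [hψ] using h
  set G : EuclideanSpace ℝ (Fin n) × EuclideanSpace ℝ (Fin n) → ℝ :=
    fun p => if p ∈ Ω ×ˢ Ω then ψ p else |f p| with hGdef
  have hGm : Measurable G := Measurable.ite (mΩ.prod mΩ) hψm hfm.abs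
  have hG0 : ∀ p, 0 ≤ G p := by
    intro p
    rw [hGdef]
    dsimp only
    split
    · exact hψ0 p
    · exact abs_nonneg _
  -- everything below is in the case where f is integrable
  by_cases hfi : Integrable f ρ
  swap
  · rw [show (∫ p, f p ∂ρ) = 0 from integral_undef hfi]
  have hGint : Integrable G ρ := by
    have h1 : Integrable ((Ω ×ˢ Ω).indicator ψ) ρ := by
      refine key_int _ (hψm.indicator (mΩ.prod mΩ)) 0 le_rfl ?_ ?_
      · intro p
        by_cases hp : p ∈ Ω ×ˢ Ω
        · rw [Set.indicator_of_mem hp, abs_of_nonneg (hψ0 p), hψ]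
        · rw [Set.indicator_of_notMem hp]
          simp only [abs_zero]
          have := hψ0 p
          rw [hψ] at this
          exact this
      · intro p hp
        rw [Set.indicator_of_notMem (fun hmem => hp ⟨hmem.1, hmem.2⟩)]
        simp
    have h2 : Integrable ((Ω ×ˢ Ω)ᶜ.indicator (fun p => |f p|)) ρ :=
      (hfi.abs).indicator (mΩ.prod mΩ).compl
    have hGeq : G = fun p => (Ω ×ˢ Ω).indicator ψ p
        + (Ω ×ˢ Ω)ᶜ.indicator (fun q => |f q|) p := by
      funext p
      simp only [hGdef]
      by_cases hp : p ∈ Ω ×ˢ Ω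
      · rw [if_pos hp, Set.indicator_of_mem hp,
          Set.indicator_of_notMem (by simpa using hp), add_zero]
      · rw [if_neg hp, Set.indicator_of_notMem hp,
          Set.indicator_of_mem (by simpa using hp), zero_add]
    rw [hGeq]
    exact h1.add h2
  -- nonnegativity of f + G and fN + G
  have hfG0 : ∀ p, 0 ≤ f p + G p := by
    intro p
    rw [hGdef]
    dsimp only
    split
    · linarith [neg_abs_le (f p), hfψ p]
    · linarith [neg_abs_le (f p)]
  -- a.e. facts about boundary values
  have haeQ : ∀ᵐ p ∂ρ, p ∈ QΩ Ω := by
    rw [hρ]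
    exact ae_restrict_mem mQ
  have hout : ∀ᵐ p ∂ρ, (p.1 ∉ Ω → v p.1 = u p.1) ∧ (p.2 ∉ Ω → v p.2 = u p.2) := by
    set Nset : Set (EuclideanSpace ℝ (Fin n)) := {y | v y = u y}ᶜ ∩ Ωᶜ with hNset
    have hNm : MeasurableSet Nset := ((measurableSet_eq_fun hvm hu).compl).inter mΩ.compl
    have hN0 : volume Nset = 0 := by
      have h : (volume.restrict Ωᶜ) ({y | v y = u y}ᶜ) = 0 := ae_iff.mp hvu
      rwa [Measure.restrict_apply ((measurableSet_eq_fun hvm hu).compl)] at h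
    have hB0 : volume ((Nset ×ˢ (Set.univ : Set (EuclideanSpace ℝ (Fin n))))
        ∪ ((Set.univ : Set (EuclideanSpace ℝ (Fin n))) ×ˢ Nset)) = 0 := by
      apply measure_union_null
      · rw [Measure.volume_eq_prod, Measure.prod_prod, hN0, zero_mul]
      · rw [Measure.volume_eq_prod, Measure.prod_prod, hN0, mul_zero]
    have hae : ∀ᵐ p ∂(volume : Measure (EuclideanSpace ℝ (Fin n) ×
        EuclideanSpace ℝ (Fin n))), p ∉ (Nset ×ˢ Set.univ ∪ Set.univ ×ˢ Nset) := by
      rw [ae_iff]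
      convert hB0 using 2
      ext p
      simp only [Set.mem_setOf_eq, not_not]
    have hres : ∀ᵐ p ∂ρ, p ∉ (Nset ×ˢ Set.univ ∪ Set.univ ×ˢ Nset) := by
      rw [hρ]
      exact ae_restrict_of_ae hae
    filter_upwards [hres] with p hp
    constructor
    · intro h1
      by_contra hne
      exact hp (Or.inl ⟨⟨hne, h1⟩, trivial⟩)
    · intro h2
      by_contra hne
      exact hp (Or.inr ⟨trivial, hne, h2⟩)
  -- key segment estimate: fN ≥ -G a.e.
  have hfNG0 : ∀ N : ℕ, ∀ᵐ p ∂ρ, 0 ≤ fN N p + G p := by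
    intro N
    filter_upwards [haeQ, hout] with p hpQ hpout
    rw [hGdef]
    dsimp only
    split
    case isTrue hp =>
      linarith [neg_abs_le (fN N p), hfNψ N p]
    case isFalse hp =>
      suffices h : -|f p| ≤ fN N p by linarith
      have hNn : (0:ℝ) ≤ (N:ℝ) := Nat.cast_nonneg N
      rcases hpQ with h1 | h2
      · -- p.1 ∈ Ω, p.2 ∉ Ω
        have h2' : p.2 ∉ Ω := fun hmem => hp ⟨h1, hmem⟩
        have hv2 : v p.2 = u p.2 := hpout.2 h2'
        have hw2 : w p.2 = 0 := by rw [hw]; dsimp only; rw [hv2]; ring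
        have hwN2 : wN N p.2 = 0 := by
          rw [hwN]; dsimp only; rw [hw2]; exact clamp_eq _ 0 (by rw [abs_zero]; exact hNn)
        have hvN2 : vN N p.2 = u p.2 := by rw [hvN]; dsimp only; rw [hwN2]; ring
        have hvN1 : vN N p.1 = u p.1 - max (-(N:ℝ)) (min (N:ℝ) (u p.1 - v p.1)) := by
          simp only [hvN, hwN, hw]
        have hseg := clamp_between (N:ℝ) (u p.1) (v p.1) hNn
        have hseg1 : min (v p.1) (u p.1) ≤ vN N p.1 := by rw [hvN1]; exact hseg.1
        have hseg2 : vN N p.1 ≤ max (v p.1) (u p.1) := by rw [hvN1]; exact hseg.2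
        have habs : |vN N p.1 - u p.2| ≤ max (|v p.1 - u p.2|) (|u p.1 - u p.2|) :=
          seg_abs hseg1 hseg2
        have hnum : -(|(|u p.1 - u p.2| - |v p.1 - v p.2|)|)
            ≤ |u p.1 - u p.2| - |vN N p.1 - vN N p.2| := by
          rw [hvN2, hv2]
          rcases le_total (|v p.1 - u p.2|) (|u p.1 - u p.2|) with hc | hc
          · have hb : |vN N p.1 - u p.2| ≤ |u p.1 - u p.2| := by
              refine habs.trans ?_
              rw [max_eq_right hc]
            have h0 := abs_nonneg (|u p.1 - u p.2| - |v p.1 - u p.2|)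
            linarith
          · have hb : |vN N p.1 - u p.2| ≤ |v p.1 - u p.2| := by
              refine habs.trans ?_
              rw [max_eq_left hc]
            have h0 := neg_abs_le (|u p.1 - u p.2| - |v p.1 - u p.2|)
            linarith
        rw [hf, hfN]
        dsimp only
        rw [abs_div, abs_of_nonneg (hdp0 p), ← neg_div]
        exact div_le_div_nonneg_right hnum (hdp0 p)
      · -- p.2 ∈ Ω, p.1 ∉ Ω
        have h1' : p.1 ∉ Ω := fun hmem => hp ⟨hmem, h2⟩
        have hv1 : v p.1 = u p.1 := hpout.1 h1'
        have hw1 : w p.1 = 0 := by rw [hw]; dsimp only; rw [hv1]; ring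
        have hwN1 : wN N p.1 = 0 := by
          rw [hwN]; dsimp only; rw [hw1]; exact clamp_eq _ 0 (by rw [abs_zero]; exact hNn)
        have hvN1 : vN N p.1 = u p.1 := by rw [hvN]; dsimp only; rw [hwN1]; ring
        have hvN2 : vN N p.2 = u p.2 - max (-(N:ℝ)) (min (N:ℝ) (u p.2 - v p.2)) := by
          simp only [hvN, hwN, hw]
        have hseg := clamp_between (N:ℝ) (u p.2) (v p.2) hNn
        have hseg1 : min (v p.2) (u p.2) ≤ vN N p.2 := by rw [hvN2]; exact hseg.1
        have hseg2 : vN N p.2 ≤ max (v p.2) (u p.2) := by rw [hvN2]; exact hseg.2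
        have habs : |vN N p.2 - u p.1| ≤ max (|v p.2 - u p.1|) (|u p.2 - u p.1|) :=
          seg_abs hseg1 hseg2
        have hnum : -(|(|u p.1 - u p.2| - |v p.1 - v p.2|)|)
            ≤ |u p.1 - u p.2| - |vN N p.1 - vN N p.2| := by
          rw [hvN1, hv1]
          have e1 : |u p.1 - vN N p.2| = |vN N p.2 - u p.1| := abs_sub_comm _ _
          have e2 : |u p.1 - v p.2| = |v p.2 - u p.1| := abs_sub_comm _ _
          have e3 : |u p.1 - u p.2| = |u p.2 - u p.1| := abs_sub_comm _ _
          rw [e1, e2]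
          rcases le_total (|v p.2 - u p.1|) (|u p.2 - u p.1|) with hc | hc
          · have hb : |vN N p.2 - u p.1| ≤ |u p.2 - u p.1| := by
              refine habs.trans ?_
              rw [max_eq_right hc]
            have h0 := abs_nonneg (|u p.1 - u p.2| - |v p.2 - u p.1|)
            rw [e3] at *
            linarith
          · have hb : |vN N p.2 - u p.1| ≤ |v p.2 - u p.1| := by
              refine habs.trans ?_
              rw [max_eq_left hc]
            have h0 := neg_abs_le (|u p.1 - u p.2| - |v p.2 - u p.1|)
            rw [e3] at *
            linarith
        rw [hf, hfN]
        dsimp only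
        rw [abs_div, abs_of_nonneg (hdp0 p), ← neg_div]
        exact div_le_div_nonneg_right hnum (hdp0 p)
  -- Fatou argument
  have hGint0 : (0:ℝ) ≤ ∫ p, G p ∂ρ := integral_nonneg hG0
  have htendsto : ∀ p, Filter.Tendsto (fun N : ℕ => ENNReal.ofReal (fN N p + G p)) atTop
      (nhds (ENNReal.ofReal (f p + G p))) := by
    intro p
    have hev : ∀ᶠ N : ℕ in atTop, fN N p = f p := by
      obtain ⟨N₀, hN₀⟩ := exists_nat_ge (max |w p.1| |w p.2|)
      rw [Filter.eventually_atTop]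
      refine ⟨N₀, fun N hN => ?_⟩
      have hcast : (N₀:ℝ) ≤ (N:ℝ) := by exact_mod_cast hN
      have hb1 : |w p.1| ≤ (N:ℝ) := le_trans (le_trans (le_max_left _ _) hN₀) hcast
      have hb2 : |w p.2| ≤ (N:ℝ) := le_trans (le_trans (le_max_right _ _) hN₀) hcast
      have e1 : wN N p.1 = w p.1 := by rw [hwN]; exact clamp_eq _ _ hb1
      have e2 : wN N p.2 = w p.2 := by rw [hwN]; exact clamp_eq _ _ hb2
      have e3 : vN N p.1 = v p.1 := by rw [hvN]; dsimp only; rw [e1, hw]; ring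
      have e4 : vN N p.2 = v p.2 := by rw [hvN]; dsimp only; rw [e2, hw]; ring
      rw [hfN, hf]
      dsimp only
      rw [e3, e4]
    have heq : (fun N : ℕ => ENNReal.ofReal (fN N p + G p))
        =ᶠ[atTop] (fun _ : ℕ => ENNReal.ofReal (f p + G p)) := by
      filter_upwards [hev] with N hN
      rw [hN]
    exact Filter.Tendsto.congr' heq.symm tendsto_const_nhds
  have h1 : ENNReal.ofReal ((∫ p, f p ∂ρ) + ∫ p, G p ∂ρ)
      = ∫⁻ p, ENNReal.ofReal (f p + G p) ∂ρ := by
    rw [← integral_add hfi hGint]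
    exact ofReal_integral_eq_lintegral_ofReal (hfi.add hGint)
      (Filter.Eventually.of_forall hfG0)
  have h3 : (∫⁻ p, ENNReal.ofReal (f p + G p) ∂ρ)
      ≤ Filter.liminf (fun N : ℕ => ∫⁻ p, ENNReal.ofReal (fN N p + G p) ∂ρ) atTop := by
    have hml := lintegral_liminf_le
      (fun N : ℕ => (ENNReal.measurable_ofReal.comp ((hfNm N).add hGm))) (μ := ρ) (u := atTop)
    refine le_trans (le_of_eq ?_) hml
    apply lintegral_congr
    intro p
    exact ((htendsto p).liminf_eq).symm
  have h4 : ∀ N : ℕ, (∫⁻ p, ENNReal.ofReal (fN N p + G p) ∂ρ)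
      ≤ ENNReal.ofReal (∫ p, G p ∂ρ) := by
    intro N
    have heq : ENNReal.ofReal (∫ p, (fN N p + G p) ∂ρ)
        = ∫⁻ p, ENNReal.ofReal (fN N p + G p) ∂ρ :=
      ofReal_integral_eq_lintegral_ofReal ((hfNint N).add hGint) (hfNG0 N)
    rw [← heq]
    apply ENNReal.ofReal_le_ofReal
    rw [integral_add (hfNint N) hGint]
    linarith [hintfN N]
  have h5 : Filter.liminf (fun N : ℕ => ∫⁻ p, ENNReal.ofReal (fN N p + G p) ∂ρ) atTop
      ≤ ENNReal.ofReal (∫ p, G p ∂ρ) := by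
    refine le_trans Filter.liminf_le_limsup ?_
    exact Filter.limsup_le_of_le (by isBoundedDefault) (Filter.Eventually.of_forall h4)
  have hkey : ENNReal.ofReal ((∫ p, f p ∂ρ) + ∫ p, G p ∂ρ)
      ≤ ENNReal.ofReal (∫ p, G p ∂ρ) := by
    rw [h1]
    exact h3.trans h5
  by_contra hcon
  push_neg at hcon
  have hlt : ENNReal.ofReal (∫ p, G p ∂ρ)
      < ENNReal.ofReal ((∫ p, f p ∂ρ) + ∫ p, G p ∂ρ) := by
    apply (ENNReal.ofReal_lt_ofReal_iff (by linarith)).mpr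
    linarith
  exact absurd (lt_of_lt_of_le hlt hkey) (lt_irrefl _)
end
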